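/- arXiv:2204.03147 — 5 statements merged into one kernel-verified Lean document; each statement's English description precedes it below -/
import Mathlib

section
/- Let d ≥ 2 and N ≥ 3d be integers, let W = ([0,N] ∩ ℤ)^d, and let Ω be the set of pairs (v,w) ∈ W × W with gcd(v₁−w₁, …, v_d−w_d) = 1. Then there is an absolute constant C₀ > 0 such that |#Ω − N^{2d}/ζ(d)| ≤ C₀·N³·log N if d = 2, and |#Ω − N^{2d}/ζ(d)| ≤ C₀·d·N^{2d−1} if d ≥ 3. -/
open Finset ArithmeticFunction

section VisiblePairsAux

/-- count of `a < M` with `a % k = r` -/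
private def cnt (M k r : ℕ) : ℕ :=
  ((Finset.univ : Finset (Fin M)).filter (fun a : Fin M => (a : ℕ) % k = r)).card

/-- count of pairs `(a,b)` in `[0,M)²` with `k ∣ |a - b|` -/
private def Bc (M k : ℕ) : ℕ :=
  ((Finset.univ : Finset (Fin M × Fin M)).filter
    (fun q => k ∣ (((q.1 : ℕ) : ℤ) - ((q.2 : ℕ) : ℤ)).natAbs)).card

private lemma cnt_eq (M k r : ℕ) (hk : 0 < k) (hr : r < k) (hrM : r < M) :
    cnt M k r = (M - 1 - r) / k + 1 := by
  classical
  unfold cnt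
  rw [show (M - 1 - r) / k + 1 = (Finset.range ((M - 1 - r) / k + 1)).card by simp]
  refine Finset.card_bij' (fun a _ => ((a : ℕ) - r) / k)
    (fun t ht => (⟨r + k * t, ?_⟩ : Fin M)) ?_ ?_ ?_ ?_
  · simp only [Finset.mem_range] at ht
    have h1 : t ≤ (M - 1 - r) / k := by omega
    have h2 : k * t ≤ k * ((M - 1 - r) / k) := Nat.mul_le_mul_left _ h1
    have h3 : k * ((M - 1 - r) / k) ≤ M - 1 - r := Nat.mul_div_le _ _ |>.trans_eq (by ring_nf)
    omega
  · intro a ha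
    simp only [Finset.mem_filter, Finset.mem_univ, true_and] at ha
    simp only [Finset.mem_range]
    have h1 : (a : ℕ) < M := a.isLt
    have hra : r ≤ (a : ℕ) := ha ▸ Nat.mod_le _ _
    have : ((a:ℕ) - r) / k ≤ (M - 1 - r) / k := by
      apply Nat.div_le_div_right; omega
    omega
  · intro t ht
    simp only [Finset.mem_filter, Finset.mem_univ, true_and, Fin.val_mk]
    rw [Nat.add_mul_mod_self_left, Nat.mod_eq_of_lt hr]
  · intro a ha
    simp only [Finset.mem_filter, Finset.mem_univ, true_and] at ha
    apply Fin.ext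
    simp only [Fin.val_mk]
    have hra : r ≤ (a : ℕ) := ha ▸ Nat.mod_le _ _
    have hdvd : k ∣ (a : ℕ) - r := by
      have := Nat.div_add_mod (a : ℕ) k
      exact ⟨(a:ℕ)/k, by omega⟩
    rw [Nat.mul_div_cancel' hdvd]
    omega
  · intro t ht
    simp only [Fin.val_mk]
    rw [Nat.add_sub_cancel_left, Nat.mul_div_cancel_left _ hk]

private lemma cnt_val (M k r : ℕ) (hk : 0 < k) (hkM : k < M) (hr : r < k) :
    cnt M k r = if r < M % k then M / k + 1 else M / k := by
  rw [cnt_eq M k r hk hr (hr.trans hkM)]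
  have hq : 1 ≤ M / k := (Nat.one_le_div_iff hk).mpr hkM.le
  have hmod := Nat.div_add_mod M k
  have hmodlt : M % k < k := Nat.mod_lt _ hk
  set q := M / k with hqdef
  set s := M % k with hsdef
  clear_value q s
  split_ifs with hcase
  · have h1 : M - 1 - r = k * q + (s - 1 - r) := by
      have e : k * q + s = M := hmod
      omega
    rw [h1, Nat.mul_add_div hk, Nat.div_eq_of_lt (by omega)]
  · obtain ⟨q', hq'⟩ : ∃ q', q = q' + 1 := ⟨q - 1, by omega⟩
    subst hq'
    have e1 : k * (q' + 1) = k * q' + k := by ring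
    have h1 : M - 1 - r = k * q' + (k + s - 1 - r) := by omega
    rw [h1, Nat.mul_add_div hk, Nat.div_eq_of_lt (by omega)]

private lemma dvd_iff_mod_eq (k a b : ℕ) :
    k ∣ (((a : ℤ)) - (b : ℤ)).natAbs ↔ a % k = b % k := by
  rw [← Int.natCast_dvd, ← Nat.modEq_iff_dvd, Nat.ModEq]
  tauto

private lemma Bc_eq_sum (M k : ℕ) (hk : 0 < k) :
    Bc M k = ∑ r ∈ Finset.range k, (cnt M k r) ^ 2 := by
  classical
  unfold Bc
  rw [Finset.card_eq_sum_card_fiberwise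
    (f := fun q : Fin M × Fin M => (q.1 : ℕ) % k) (t := Finset.range k)
    (fun q _ => Finset.mem_range.mpr (Nat.mod_lt _ hk))]
  refine Finset.sum_congr rfl fun r _ => ?_
  have : (Finset.univ.filter
      (fun q : Fin M × Fin M => k ∣ (((q.1 : ℕ) : ℤ) - ((q.2 : ℕ) : ℤ)).natAbs)).filter
      (fun q => (q.1 : ℕ) % k = r) =
      ((Finset.univ : Finset (Fin M)).filter (fun a : Fin M => (a : ℕ) % k = r)) ×ˢ
      ((Finset.univ : Finset (Fin M)).filter (fun a : Fin M => (a : ℕ) % k = r)) := by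
    ext q
    simp only [Finset.mem_filter, Finset.mem_univ, true_and, Finset.mem_product,
      dvd_iff_mod_eq]
    constructor
    · rintro ⟨h1, h2⟩; exact ⟨h2, by omega⟩
    · rintro ⟨h1, h2⟩; exact ⟨by omega, h1⟩
  rw [this, Finset.card_product]
  unfold cnt; ring

private lemma Bc_formula (M k : ℕ) (hk : 0 < k) (hkM : k < M) :
    k * Bc M k = M ^ 2 + (M % k) * (k - M % k) := by
  rw [Bc_eq_sum M k hk]
  have hsum : ∑ r ∈ Finset.range k, (cnt M k r) ^ 2 =
      ∑ r ∈ Finset.range k, (if r < M % k then (M / k + 1) ^ 2 else (M / k) ^ 2) := by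
    refine Finset.sum_congr rfl fun r hr => ?_
    rw [cnt_val M k r hk hkM (Finset.mem_range.mp hr)]
    split_ifs <;> rfl
  rw [hsum, Finset.sum_ite, Finset.sum_const, Finset.sum_const]
  have hmodlt : M % k < k := Nat.mod_lt _ hk
  have hfilt1 : (Finset.range k).filter (fun r => r < M % k) = Finset.range (M % k) := by
    ext r; simp only [Finset.mem_filter, Finset.mem_range]; omega
  have hcard1 : ((Finset.range k).filter (fun r => r < M % k)).card = M % k := by
    rw [hfilt1, Finset.card_range]
  have hcard2 : ((Finset.range k).filter (fun r => ¬ r < M % k)).card = k - M % k := by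
    have h := Finset.card_filter_add_card_filter_not
      (s := Finset.range k) (p := fun r => r < M % k)
    simp only [Finset.card_range] at h
    omega
  rw [hcard1, hcard2, smul_eq_mul, smul_eq_mul]
  have hmod := Nat.div_add_mod M k
  have hq : 1 ≤ M / k := (Nat.one_le_div_iff hk).mpr hkM.le
  set q := M / k
  set s := M % k
  clear_value q s
  obtain ⟨t, ht⟩ : ∃ t, k = s + t := ⟨k - s, by omega⟩
  subst ht
  have hM : M = (s + t) * q + s := by omega
  subst hM
  have : s + t - s = t := by omega
  rw [this]
  ring

private abbrev PT (d M : ℕ) := (Fin d → Fin M) × (Fin d → Fin M)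

private lemma card_pi_pairs (d M : ℕ) (Q : Fin M → Fin M → Prop)
    [∀ a b, Decidable (Q a b)] :
    (((Finset.univ : Finset (PT d M))).filter
        (fun p => ∀ i, Q (p.1 i) (p.2 i))).card
      = (((Finset.univ : Finset (Fin M × Fin M)).filter (fun q => Q q.1 q.2)).card) ^ d := by
  classical
  rw [← Fintype.card_subtype, ← Fintype.card_subtype]
  have e : {p : PT d M // ∀ i, Q (p.1 i) (p.2 i)} ≃
      (Fin d → {q : Fin M × Fin M // Q q.1 q.2}) :=
    { toFun := fun x i => ⟨(x.1.1 i, x.1.2 i), x.2 i⟩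
      invFun := fun y => ⟨(fun i => (y i).1.1, fun i => (y i).1.2), fun i => (y i).2⟩
      left_inv := fun x => rfl
      right_inv := fun y => rfl }
  rw [Fintype.card_congr e, Fintype.card_pi]
  simp

private lemma card_diag (d M : ℕ) :
    (((Finset.univ : Finset (PT d M))).filter (fun p => p.1 = p.2)).card = M ^ d := by
  classical
  rw [← Fintype.card_subtype]
  have e : {p : PT d M // p.1 = p.2} ≃ (Fin d → Fin M) :=
    { toFun := fun x => x.1.1
      invFun := fun a => ⟨(a, a), rfl⟩
      left_inv := fun x => by
        obtain ⟨⟨a, b⟩, h⟩ := x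
        simp only at h
        subst h
        rfl
      right_inv := fun a => rfl }
  rw [Fintype.card_congr e, Fintype.card_fun]
  simp

private noncomputable def gval (d M : ℕ) (p : PT d M) : ℕ :=
  Finset.univ.gcd (fun i => (((p.1 i : ℕ) : ℤ) - ((p.2 i : ℕ) : ℤ)).natAbs)

private lemma gval_le (d N : ℕ) (p : PT d (N + 1)) (h : gval d (N + 1) p ≠ 0) :
    gval d (N + 1) p ∈ Finset.Icc 1 N := by
  classical
  have h2 : ∃ i, (((p.1 i : ℕ) : ℤ) - ((p.2 i : ℕ) : ℤ)).natAbs ≠ 0 := by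
    by_contra hc
    push_neg at hc
    exact h (Finset.gcd_eq_zero_iff.mpr (fun i _ => hc i))
  obtain ⟨i, hi⟩ := h2
  have hdvd : gval d (N + 1) p ∣ (((p.1 i : ℕ) : ℤ) - ((p.2 i : ℕ) : ℤ)).natAbs :=
    Finset.gcd_dvd (Finset.mem_univ i)
  have hle : (((p.1 i : ℕ) : ℤ) - ((p.2 i : ℕ) : ℤ)).natAbs ≤ N := by
    have h1 : (p.1 i : ℕ) < N + 1 := (p.1 i).isLt
    have h2 : (p.2 i : ℕ) < N + 1 := (p.2 i).isLt
    omega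
  have := Nat.le_of_dvd (Nat.pos_of_ne_zero hi) hdvd
  simp only [Finset.mem_Icc]
  omega

private theorem key_identity (d N : ℕ) :
    ((Finset.univ.filter (fun p : PT d (N + 1) =>
        Finset.univ.gcd
          (fun i => (((p.1 i : ℕ) : ℤ) - ((p.2 i : ℕ) : ℤ)).natAbs) = 1)).card : ℤ)
      = ∑ k ∈ Finset.Icc 1 N,
          (moebius k : ℤ) * ((Bc (N + 1) k : ℤ) ^ d - ((N + 1 : ℕ) : ℤ) ^ d) := by
  classical
  have step1 : ((Finset.univ.filter (fun p : PT d (N + 1) =>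
      gval d (N + 1) p = 1)).card : ℤ)
      = ∑ p : PT d (N + 1), if gval d (N + 1) p = 1 then (1 : ℤ) else 0 := by
    rw [Finset.card_filter]
    push_cast
    rfl
  have step2 : ∀ p : PT d (N + 1),
      (if gval d (N + 1) p = 1 then (1 : ℤ) else 0)
        = ∑ k ∈ (gval d (N + 1) p).divisors, (moebius k : ℤ) := by
    intro p
    rw [← coe_mul_zeta_apply, moebius_mul_coe_zeta, one_apply]
  have step3 : ∀ p : PT d (N + 1),
      ∑ k ∈ (gval d (N + 1) p).divisors, (moebius k : ℤ)
        = ∑ k ∈ Finset.Icc 1 N,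
            (if k ∣ gval d (N + 1) p ∧ gval d (N + 1) p ≠ 0 then (moebius k : ℤ) else 0) := by
    intro p
    have hsub : (gval d (N + 1) p).divisors ⊆ Finset.Icc 1 N := by
      intro k hk
      have h1 := Nat.pos_of_mem_divisors hk
      have h2 := (Nat.mem_divisors.mp hk).1
      have h3 := (Nat.mem_divisors.mp hk).2
      have h4 := gval_le d N p h3
      simp only [Finset.mem_Icc] at h4 ⊢
      exact ⟨h1, (Nat.le_of_dvd (by omega) h2).trans h4.2⟩
    have h0 : ∑ k ∈ (gval d (N + 1) p).divisors, (moebius k : ℤ)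
        = ∑ k ∈ (gval d (N + 1) p).divisors,
            (if k ∣ gval d (N + 1) p ∧ gval d (N + 1) p ≠ 0 then (moebius k : ℤ) else 0) := by
      refine Finset.sum_congr rfl fun k hk => ?_
      rw [if_pos ⟨(Nat.mem_divisors.mp hk).1, (Nat.mem_divisors.mp hk).2⟩]
    rw [h0]
    refine Finset.sum_subset hsub fun k _ hk => ?_
    rw [Nat.mem_divisors] at hk
    rw [if_neg (by tauto)]
  show ((Finset.univ.filter (fun p : PT d (N + 1) =>
        gval d (N + 1) p = 1)).card : ℤ) = _
  calc ((Finset.univ.filter (fun p : PT d (N + 1) =>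
        gval d (N + 1) p = 1)).card : ℤ)
      = ∑ p : PT d (N + 1), ∑ k ∈ Finset.Icc 1 N,
          (if k ∣ gval d (N + 1) p ∧ gval d (N + 1) p ≠ 0 then (moebius k : ℤ) else 0) := by
        rw [step1]
        exact Finset.sum_congr rfl fun p _ => (step2 p).trans (step3 p)
    _ = ∑ k ∈ Finset.Icc 1 N, ∑ p : PT d (N + 1),
          (if k ∣ gval d (N + 1) p ∧ gval d (N + 1) p ≠ 0 then (moebius k : ℤ) else 0) :=
        Finset.sum_comm
    _ = ∑ k ∈ Finset.Icc 1 N,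
          (moebius k : ℤ) * ((Bc (N + 1) k : ℤ) ^ d - ((N + 1 : ℕ) : ℤ) ^ d) := by
        refine Finset.sum_congr rfl fun k hk => ?_
        rw [Finset.mem_Icc] at hk
        rw [Finset.sum_ite, Finset.sum_const_zero, add_zero, Finset.sum_const,
          nsmul_eq_mul, mul_comm]
        congr 1
        have hA : (Finset.univ.filter (fun p : PT d (N + 1) =>
            k ∣ gval d (N + 1) p)).card = Bc (N + 1) k ^ d := by
          have : (Finset.univ.filter (fun p : PT d (N + 1) => k ∣ gval d (N + 1) p))
              = Finset.univ.filter (fun p : PT d (N + 1) =>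
                  ∀ i, k ∣ (((p.1 i : ℕ) : ℤ) - ((p.2 i : ℕ) : ℤ)).natAbs) := by
            ext p
            simp only [Finset.mem_filter, Finset.mem_univ, true_and]
            rw [gval, Finset.dvd_gcd_iff]
            simp
          rw [this, card_pi_pairs d (N + 1)
            (fun a b => k ∣ (((a : ℕ) : ℤ) - ((b : ℕ) : ℤ)).natAbs)]
          rfl
        have hB : (Finset.univ.filter (fun p : PT d (N + 1) =>
            gval d (N + 1) p = 0)).card = (N + 1) ^ d := by
          have : (Finset.univ.filter (fun p : PT d (N + 1) => gval d (N + 1) p = 0))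
              = Finset.univ.filter (fun p : PT d (N + 1) => p.1 = p.2) := by
            ext p
            simp only [Finset.mem_filter, Finset.mem_univ, true_and]
            rw [gval, Finset.gcd_eq_zero_iff]
            constructor
            · intro h
              funext i
              have := h i (Finset.mem_univ i)
              have h1 : ((p.1 i : ℕ) : ℤ) = ((p.2 i : ℕ) : ℤ) := by omega
              exact Fin.ext (by exact_mod_cast h1)
            · intro h i _
              rw [h]
              simp
          rw [this, card_diag]
        have hsub2 : (Finset.univ.filter (fun p : PT d (N + 1) => gval d (N + 1) p = 0))
            ⊆ (Finset.univ.filter (fun p : PT d (N + 1) => k ∣ gval d (N + 1) p)) := by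
          intro p hp
          simp only [Finset.mem_filter, Finset.mem_univ, true_and] at hp ⊢
          rw [hp]
          exact dvd_zero k
        have hset : (Finset.univ.filter (fun p : PT d (N + 1) =>
            k ∣ gval d (N + 1) p ∧ gval d (N + 1) p ≠ 0))
            = (Finset.univ.filter (fun p : PT d (N + 1) => k ∣ gval d (N + 1) p))
              \ (Finset.univ.filter (fun p : PT d (N + 1) => gval d (N + 1) p = 0)) := by
          ext p
          simp only [Finset.mem_filter, Finset.mem_univ, true_and, Finset.mem_sdiff]
          try tauto
        rw [hset, Finset.card_sdiff_of_subset hsub2, hA, hB]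
        have hle : (N + 1) ^ d ≤ Bc (N + 1) k ^ d := by
          have hM : (N + 1) ≤ Bc (N + 1) k := by
            unfold Bc
            calc N + 1 = (Finset.univ : Finset (Fin (N+1))).card := by simp
              _ ≤ _ := by
                  apply Finset.card_le_card_of_injOn (fun a => (a, a))
                  · intro a _
                    simp
                  · intro a _ b _ hab
                    exact (Prod.mk.injEq _ _ _ _ ▸ hab).1
          exact Nat.pow_le_pow_left hM d
        push_cast [Nat.cast_sub hle]
        ring

/- ## Analytic lemmas -/

private lemma bern (x : ℝ) (hx : 0 ≤ x) :
    ∀ n : ℕ, n * x ≤ 1 → (1 + x) ^ n * (1 - n * x) ≤ 1 := by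
  intro n
  induction n with
  | zero => simp
  | succ m ih =>
    intro h
    have hm : (m : ℝ) * x ≤ 1 := by
      push_cast at h ⊢
      nlinarith
    have ihm := ih hm
    have hpow : (0:ℝ) ≤ (1 + x) ^ m := by positivity
    have hmx : (0:ℝ) ≤ (m:ℝ) * (x * x) := by positivity
    have key : (1 + x) * (1 - ((m:ℝ)+1) * x) ≤ 1 - m * x := by nlinarith [sq_nonneg x]
    calc (1 + x) ^ (m+1) * (1 - ((m+1 : ℕ) : ℝ) * x)
        = (1 + x) ^ m * ((1 + x) * (1 - ((m:ℝ)+1) * x)) := by push_cast; ring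
      _ ≤ (1 + x) ^ m * (1 - m * x) := by
          apply mul_le_mul_of_nonneg_left _ hpow
          exact key
      _ ≤ 1 := ihm

private lemma pow_one_add_le (x : ℝ) (hx : 0 ≤ x) (n : ℕ) (h : (n : ℝ) * x ≤ 2/3) :
    (1 + x) ^ n ≤ 3 := by
  have h1 : (n : ℝ) * x ≤ 1 := by linarith
  have := bern x hx n h1
  have h2 : (1:ℝ)/3 ≤ 1 - n * x := by linarith
  nlinarith [pow_nonneg (by linarith : (0:ℝ) ≤ 1 + x) n]

private lemma pow_one_add_le_two (x : ℝ) (hx : 0 ≤ x) (n : ℕ) (h : (n : ℝ) * x ≤ 1/2) :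
    (1 + x) ^ n ≤ 2 := by
  have h1 : (n : ℝ) * x ≤ 1 := by linarith
  have := bern x hx n h1
  have h2 : (1:ℝ)/2 ≤ 1 - n * x := by linarith
  nlinarith [pow_nonneg (by linarith : (0:ℝ) ≤ 1 + x) n]

private lemma pow_sub_pow_le (x y : ℝ) (hy : 0 ≤ y) (hxy : y ≤ x) :
    ∀ n : ℕ, x ^ (n+1) - y ^ (n+1) ≤ ((n:ℝ)+1) * (x - y) * x ^ n := by
  intro n
  induction n with
  | zero => simp
  | succ m ih =>
    have hx : 0 ≤ x := hy.trans hxy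
    have hyx : y ^ (m+1) ≤ x ^ (m+1) := pow_le_pow_left₀ hy hxy _
    calc x ^ (m+2) - y ^ (m+2) = x * (x ^ (m+1) - y ^ (m+1)) + (x - y) * y ^ (m+1) := by ring
      _ ≤ x * (((m:ℝ)+1) * (x - y) * x ^ m) + (x - y) * x ^ (m+1) := by
          have h1 : x * (x ^ (m+1) - y ^ (m+1)) ≤ x * (((m:ℝ)+1) * (x - y) * x ^ m) :=
            mul_le_mul_of_nonneg_left ih hx
          have h2 : (x - y) * y ^ (m+1) ≤ (x - y) * x ^ (m+1) :=
            mul_le_mul_of_nonneg_left hyx (by linarith)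
          linarith
      _ = ((m:ℝ)+2) * (x - y) * x ^ (m+1) := by ring
      _ = ((↑(m+1):ℝ)+1) * (x - y) * x ^ (m+1) := by push_cast; ring

private lemma tele_hasSum (N : ℕ) (hN : 1 ≤ N) :
    HasSum (fun i : ℕ => 1 / (((i:ℝ) + N) * ((i:ℝ) + N + 1))) (1 / N) := by
  have hpart : ∀ n : ℕ, ∑ i ∈ Finset.range n, 1 / (((i:ℝ) + N) * ((i:ℝ) + N + 1))
      = 1 / N - 1 / (N + n) := by
    intro n
    induction n with
    | zero => simp
    | succ m ih =>
      rw [Finset.sum_range_succ, ih]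
      have h1 : ((m:ℝ) + N) > 0 := by positivity
      have h2 : ((m:ℝ) + N + 1) > 0 := by positivity
      push_cast
      field_simp
      ring
  rw [hasSum_iff_tendsto_nat_of_nonneg (fun i => by positivity)]
  simp_rw [hpart]
  have h1 : Filter.Tendsto (fun n : ℕ => (N:ℝ) + n) Filter.atTop Filter.atTop :=
    Filter.tendsto_atTop_add_const_left _ _ tendsto_natCast_atTop_atTop
  have h2 := h1.inv_tendsto_atTop
  have h3 : Filter.Tendsto (fun n : ℕ => 1 / ((N:ℝ) + n)) Filter.atTop (nhds 0) := by
    simpa [one_div, Pi.inv_def] using h2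
  have := Filter.Tendsto.const_sub (1 / (N:ℝ)) h3
  simpa using this

private noncomputable def Zd (d : ℕ) : ℝ := ∑' n : ℕ, 1 / ((n : ℝ) + 1) ^ d

private lemma summable_base (d : ℕ) (hd : 2 ≤ d) :
    Summable (fun n : ℕ => 1 / ((n : ℝ) + 1) ^ d) := by
  have h : Summable (fun n : ℕ => 1 / (n : ℝ) ^ d) :=
    (Real.summable_one_div_nat_pow).mpr (by omega)
  have := (summable_nat_add_iff (f := fun n : ℕ => 1 / (n : ℝ) ^ d) 1).mpr h
  simpa [add_comm] using this

private lemma Zd_ge_one (d : ℕ) (hd : 2 ≤ d) : 1 ≤ Zd d := by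
  have hsum := summable_base d hd
  have h := Summable.le_tsum hsum 0 (fun i _ => by positivity)
  rw [Zd]
  norm_num at h
  simpa [one_div] using h

private lemma riemannZeta_nat_eq (d : ℕ) (hd : 2 ≤ d) : riemannZeta (d : ℂ) = (Zd d : ℂ) := by
  have hs : 1 < (d : ℂ).re := by
    simp only [Complex.natCast_re]
    exact_mod_cast (by omega : 1 < d)
  rw [zeta_eq_tsum_one_div_nat_add_one_cpow hs, Zd, Complex.ofReal_tsum]
  refine tsum_congr fun n => ?_
  have h1 : ((n : ℂ) + 1) ^ (d : ℂ) = ((n : ℂ) + 1) ^ (d : ℕ) := by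
    rw [Complex.cpow_natCast]
  rw [h1]
  push_cast
  norm_num

private lemma moebius_abs_le (k : ℕ) : ‖((moebius k : ℤ) : ℝ)‖ ≤ 1 := by
  rw [Real.norm_eq_abs, ← Int.cast_abs]
  exact_mod_cast abs_moebius_le_one (n := k)

private lemma moebius_norm_summable (d : ℕ) (hd : 2 ≤ d) :
    Summable (fun k : ℕ => ‖(moebius k : ℝ) / (k : ℝ) ^ d‖) := by
  have hg : Summable (fun k : ℕ => 1 / (k : ℝ) ^ d) :=
    (Real.summable_one_div_nat_pow).mpr (by omega)
  apply Summable.of_nonneg_of_le (fun k => norm_nonneg _) _ hg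
  intro k
  rcases eq_or_ne k 0 with rfl | hk
  · simp
  · have hk1 : (1:ℝ) ≤ (k:ℝ) := by exact_mod_cast Nat.one_le_iff_ne_zero.mpr hk
    have hkd : (0:ℝ) < (k:ℝ) ^ d := by positivity
    rw [norm_div, div_le_div_iff₀ (by exact lt_of_lt_of_le zero_lt_one (by
      rw [Real.norm_eq_abs, abs_of_pos hkd]; exact one_le_pow₀ hk1)) hkd]
    calc ‖((moebius k : ℤ) : ℝ)‖ * (k:ℝ)^d ≤ 1 * (k:ℝ)^d :=
          mul_le_mul_of_nonneg_right (moebius_abs_le k) hkd.le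
      _ = 1 * ‖(k:ℝ)^d‖ := by rw [Real.norm_eq_abs, abs_of_pos hkd]

private lemma moebius_tsum (d : ℕ) (hd : 2 ≤ d) :
    ∑' k : ℕ, (moebius k : ℝ) / (k : ℝ) ^ d = 1 / Zd d := by
  have hs : 1 < (d : ℂ).re := by
    simp only [Complex.natCast_re]
    exact_mod_cast (by omega : 1 < d)
  have h1 : riemannZeta (d : ℂ) * LSeries (fun n => (moebius n : ℂ)) (d : ℂ) = 1 := by
    rw [← LSeries_one_eq_riemannZeta hs]
    exact LSeries_one_mul_Lseries_moebius hs
  have h2 : LSeries (fun n => (moebius n : ℂ)) (d : ℂ) = (riemannZeta (d : ℂ))⁻¹ :=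
    eq_inv_of_mul_eq_one_left (by rw [mul_comm] at h1; exact h1)
  have h3 : LSeries (fun n => (moebius n : ℂ)) (d : ℂ)
      = ((∑' k : ℕ, (moebius k : ℝ) / (k : ℝ) ^ d : ℝ) : ℂ) := by
    rw [LSeries, Complex.ofReal_tsum]
    refine tsum_congr fun n => ?_
    rcases eq_or_ne n 0 with rfl | hn
    · rw [LSeries.term_zero]
      simp
    · rw [LSeries.term_of_ne_zero hn]
      have h4 : (n : ℂ) ^ (d : ℂ) = (n : ℂ) ^ (d : ℕ) := by
        rw [Complex.cpow_natCast]
      rw [h4]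
      push_cast
      norm_num
  rw [h3, riemannZeta_nat_eq d hd] at h2
  rw [← Complex.ofReal_inv] at h2
  have := Complex.ofReal_injective h2
  rw [this, one_div]

set_option maxHeartbeats 1000000 in
private lemma partial_close (d N : ℕ) (hd : 2 ≤ d) (hN : 1 ≤ N) :
    |∑ k ∈ Finset.Icc 1 N, (moebius k : ℝ) / (k : ℝ) ^ d - 1 / Zd d| ≤ 1 / N := by
  set f : ℕ → ℝ := fun k => (moebius k : ℝ) / (k : ℝ) ^ d with hf
  have hsumf : Summable f := (moebius_norm_summable d hd).of_norm
  have h1 : ∑ k ∈ Finset.Icc 1 N, f k = ∑ k ∈ Finset.range (N + 1), f k := by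
    apply Finset.sum_subset
    · intro k hk
      simp only [Finset.mem_Icc] at hk
      simp only [Finset.mem_range]
      omega
    · intro k hk hk'
      simp only [Finset.mem_range] at hk
      simp only [Finset.mem_Icc] at hk'
      have : k = 0 := by omega
      subst this
      simp [hf]
  have h2 := (Summable.sum_add_tsum_nat_add (f := f) (N + 1) hsumf).symm
  rw [← moebius_tsum d hd, h1, ← hf, h2]
  rw [show ∑ k ∈ Finset.range (N+1), f k -
      (∑ i ∈ Finset.range (N + 1), f i + ∑' (i : ℕ), f (i + (N + 1)))
      = -(∑' (i : ℕ), f (i + (N + 1))) by ring, abs_neg]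
  have hnorm : Summable (fun i : ℕ => ‖f (i + (N + 1))‖) :=
    (summable_nat_add_iff (N + 1)).mpr (moebius_norm_summable d hd)
  have htele := tele_hasSum N hN
  calc |∑' i : ℕ, f (i + (N + 1))| ≤ ∑' i : ℕ, ‖f (i + (N + 1))‖ := by
        simpa using norm_tsum_le_tsum_norm hnorm
    _ ≤ ∑' i : ℕ, 1 / (((i:ℝ) + N) * ((i:ℝ) + N + 1)) := by
        apply Summable.tsum_le_tsum _ hnorm htele.summable
        intro i
        have hb : (0:ℝ) < ((i:ℝ) + N) := by
          have : (1:ℝ) ≤ (N:ℝ) := by exact_mod_cast hN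
          positivity
        have hb2 : (0:ℝ) < ((i:ℝ) + N + 1) := by linarith
        have hcast : ((i + (N+1) : ℕ) : ℝ) = (i:ℝ) + N + 1 := by push_cast; ring
        rw [hf]
        simp only [norm_div]
        rw [hcast]
        have hden : ((i:ℝ) + N) * ((i:ℝ) + N + 1) ≤ ((i:ℝ) + N + 1) ^ d := by
          calc ((i:ℝ) + N) * ((i:ℝ) + N + 1)
              ≤ ((i:ℝ) + N + 1) * ((i:ℝ) + N + 1) := by nlinarith
            _ = ((i:ℝ) + N + 1) ^ 2 := by ring
            _ ≤ ((i:ℝ) + N + 1) ^ d := by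
                apply pow_le_pow_right₀ _ hd
                have : (1:ℝ) ≤ (N:ℝ) := by exact_mod_cast hN
                linarith
        have hnd : ‖((i:ℝ) + N + 1) ^ d‖ = ((i:ℝ) + N + 1) ^ d := by
          rw [Real.norm_eq_abs, abs_of_pos (by positivity)]
        rw [hnd]
        exact div_le_div₀ zero_le_one (moebius_abs_le _) (by positivity) hden
    _ = 1 / N := htele.tsum_eq

private lemma M_pow_le (N d e : ℕ) (hd : 2 ≤ d) (hN : 3 * d ≤ N) (he : e ≤ 2 * d) :
    ((N : ℝ) + 1) ^ e ≤ 3 * (N : ℝ) ^ e := by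
  have hN0 : (0:ℝ) < N := by
    have : 0 < N := by omega
    exact_mod_cast this
  have h1 : ((N:ℝ) + 1) = (N:ℝ) * (1 + 1/N) := by field_simp
  rw [h1, mul_pow]
  have h2 : (1 + 1/(N:ℝ)) ^ e ≤ 3 := by
    apply pow_one_add_le _ (by positivity)
    have he' : (e:ℝ) ≤ 2 * d := by exact_mod_cast he
    have hN' : 3 * (d:ℝ) ≤ N := by exact_mod_cast hN
    rw [mul_one_div, div_le_div_iff₀ hN0 (by norm_num : (0:ℝ) < 3)]
    nlinarith
  calc (N:ℝ)^e * (1 + 1/N)^e ≤ (N:ℝ)^e * 3 :=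
        mul_le_mul_of_nonneg_left h2 (by positivity)
    _ = 3 * (N:ℝ)^e := by ring

private lemma error_sum_bound (d N : ℕ) (hd : 2 ≤ d) (hN : 3 * d ≤ N) :
    ∑ k ∈ Finset.Icc 1 N, (k : ℝ) * ((((N:ℝ)+1)^2 / k + k) ^ (d - 1))
      ≤ 12 * (N : ℝ) ^ (2 * d - 1) := by
  set M : ℝ := (N : ℝ) + 1 with hM
  have hN6 : 6 ≤ N := by omega
  have hNR : (6:ℝ) ≤ (N:ℝ) := by exact_mod_cast hN6
  have hN0 : (0:ℝ) < N := by linarith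
  have hM0 : (0:ℝ) < M := by rw [hM]; linarith
  have key : ∀ k ∈ Finset.Icc 1 N, (k : ℝ) * ((M^2 / k + k) ^ (d - 1))
      ≤ ∑ j ∈ Finset.range d, ((d-1).choose j * M^(2*j) + 3 * (d-1).choose j * (N:ℝ)^d) := by
    intro k hk
    rw [Finset.mem_Icc] at hk
    have hk1 : (1:ℝ) ≤ (k:ℝ) := by exact_mod_cast hk.1
    have hkN : (k:ℝ) ≤ (N:ℝ) := by exact_mod_cast hk.2
    have hk0 : (0:ℝ) < k := by linarith
    have hexp : (M^2 / k + k) ^ (d - 1)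
        = ∑ j ∈ Finset.range d, (M^2/k)^j * (k:ℝ)^(d-1-j) * ((d-1).choose j) := by
      rw [add_pow, show d - 1 + 1 = d by omega]
    rw [hexp, Finset.mul_sum]
    apply Finset.sum_le_sum
    intro j hj
    rw [Finset.mem_range] at hj
    have hC : (0:ℝ) ≤ ((d-1).choose j : ℝ) := by positivity
    have hterm : (k:ℝ) * ((M^2/k)^j * (k:ℝ)^(d-1-j) * ((d-1).choose j))
        = ((d-1).choose j : ℝ) * (M^(2*j) * ((k:ℝ)^(d-j) / (k:ℝ)^j)) := by
      rw [div_pow, ← pow_mul]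
      rw [show d - j = (d - 1 - j) + 1 by omega]
      rw [pow_succ]
      field_simp
    rw [hterm]
    by_cases hcase : d ≤ 2 * j
    · have h1 : (k:ℝ)^(d-j) ≤ (k:ℝ)^j := pow_le_pow_right₀ hk1 (by omega)
      have h2 : (k:ℝ)^(d-j) / (k:ℝ)^j ≤ 1 := by
        rw [div_le_one (by positivity)]
        exact h1
      have h3 : M^(2*j) * ((k:ℝ)^(d-j) / (k:ℝ)^j) ≤ M^(2*j) * 1 :=
        mul_le_mul_of_nonneg_left h2 (by positivity)
      have h4 : (0:ℝ) ≤ 3 * ((d-1).choose j : ℝ) * (N:ℝ)^d := by positivity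
      calc ((d-1).choose j : ℝ) * (M^(2*j) * ((k:ℝ)^(d-j) / (k:ℝ)^j))
          ≤ ((d-1).choose j : ℝ) * (M^(2*j) * 1) := mul_le_mul_of_nonneg_left h3 hC
        _ = ((d-1).choose j : ℝ) * M^(2*j) := by ring
        _ ≤ _ := by linarith
    · push_neg at hcase
      have hsplit : d - j = (d - 2*j) + j := by omega
      have h1 : (k:ℝ)^(d-j) / (k:ℝ)^j = (k:ℝ)^(d-2*j) := by
        rw [hsplit, pow_add]
        field_simp
      have h2 : (k:ℝ)^(d-2*j) ≤ (N:ℝ)^(d-2*j) := by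
        apply pow_le_pow_left₀ (by linarith) hkN
      have h3 : M^(2*j) ≤ 3 * (N:ℝ)^(2*j) := M_pow_le N d (2*j) hd hN (by omega)
      have h4 : M^(2*j) * ((k:ℝ)^(d-j)/(k:ℝ)^j) ≤ 3 * (N:ℝ)^(2*j) * (N:ℝ)^(d-2*j) := by
        rw [h1]
        apply mul_le_mul h3 h2 (by positivity) (by positivity)
      have h5 : (3:ℝ) * (N:ℝ)^(2*j) * (N:ℝ)^(d-2*j) = 3 * (N:ℝ)^d := by
        rw [mul_assoc, ← pow_add]
        congr 2
        omega
      have h6 : (0:ℝ) ≤ ((d-1).choose j : ℝ) * M^(2*j) := by positivity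
      calc ((d-1).choose j : ℝ) * (M^(2*j) * ((k:ℝ)^(d-j) / (k:ℝ)^j))
          ≤ ((d-1).choose j : ℝ) * (3 * (N:ℝ)^d) := by
            apply mul_le_mul_of_nonneg_left _ hC
            rw [← h5]
            exact h4
        _ = 3 * ((d-1).choose j : ℝ) * (N:ℝ)^d := by ring
        _ ≤ _ := by linarith
  have hsumA : ∑ j ∈ Finset.range d, ((d-1).choose j : ℝ) * M^(2*j) = (M^2 + 1)^(d-1) := by
    rw [add_pow, show d - 1 + 1 = d by omega]
    refine Finset.sum_congr rfl fun j _ => by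
      rw [one_pow, ← pow_mul]
      ring
  have hsumB : ∑ j ∈ Finset.range d, (3:ℝ) * ((d-1).choose j) * (N:ℝ)^d
      = 3 * 2^(d-1) * (N:ℝ)^d := by
    rw [← Finset.sum_mul, ← Finset.mul_sum]
    congr 2
    have := Nat.sum_range_choose (d-1)
    rw [show d - 1 + 1 = d by omega] at this
    rw [show ((2:ℝ)^(d-1)) = ((2^(d-1) : ℕ) : ℝ) by push_cast; ring, ← this]
    push_cast
    ring
  have hA2 : (M^2 + 1)^(d-1) ≤ 6 * (N:ℝ)^(2*d-2) := by
    have e1 : M^2 + 1 = M^2 * (1 + 1/M^2) := by field_simp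
    rw [e1, mul_pow]
    have e2 : (1 + 1/M^2)^(d-1) ≤ 2 := by
      apply pow_one_add_le_two _ (by positivity)
      have hdc : ((d - 1 : ℕ) : ℝ) ≤ (d:ℝ) := by
        have : (d - 1 : ℕ) ≤ d := by omega
        exact_mod_cast this
      have hdR : (2:ℝ) ≤ (d:ℝ) := by exact_mod_cast hd
      have h7 : (7:ℝ) ≤ M := by rw [hM]; linarith
      have hdM : 3 * (d:ℝ) ≤ M := by
        rw [hM]
        have : 3 * (d:ℝ) ≤ (N:ℝ) := by exact_mod_cast hN
        linarith
      rw [mul_one_div, div_le_div_iff₀ (by positivity) (by norm_num : (0:ℝ) < 2)]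
      nlinarith [mul_le_mul_of_nonneg_right hdM (le_of_lt hM0),
        mul_le_mul_of_nonneg_left h7 (by positivity : (0:ℝ) ≤ 3 * (d:ℝ))]
    have e3 : (M^2)^(d-1) ≤ 3 * ((N:ℝ)^2)^(d-1) := by
      have := M_pow_le N d (2*(d-1)) hd hN (by omega)
      rw [pow_mul, pow_mul] at this
      exact this
    calc (M^2)^(d-1) * (1 + 1/M^2)^(d-1) ≤ (M^2)^(d-1) * 2 :=
          mul_le_mul_of_nonneg_left e2 (by positivity)
      _ ≤ 3 * ((N:ℝ)^2)^(d-1) * 2 := by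
          apply mul_le_mul_of_nonneg_right e3 (by norm_num)
      _ = 6 * ((N:ℝ)^2)^(d-1) := by ring
      _ = 6 * (N:ℝ)^(2*d-2) := by
          rw [← pow_mul, show 2*(d-1) = 2*d-2 by omega]
  have hB2 : (3:ℝ) * 2^(d-1) * (N:ℝ)^d ≤ 6 * (N:ℝ)^(2*d-2) := by
    have e1 : (2:ℝ)^(d-1) = 2 * 2^(d-2) := by
      rw [show d - 1 = (d-2) + 1 by omega, pow_succ]
      ring
    have e2 : (2:ℝ)^(d-2) ≤ (N:ℝ)^(d-2) := by
      apply pow_le_pow_left₀ (by norm_num) (by linarith)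
    have e3 : (N:ℝ)^(d-2) * (N:ℝ)^d = (N:ℝ)^(2*d-2) := by
      rw [← pow_add, show d-2+d = 2*d-2 by omega]
    calc (3:ℝ) * 2^(d-1) * (N:ℝ)^d = 6 * 2^(d-2) * (N:ℝ)^d := by rw [e1]; ring
      _ ≤ 6 * (N:ℝ)^(d-2) * (N:ℝ)^d := by
          have : (0:ℝ) ≤ (N:ℝ)^d := by positivity
          nlinarith
      _ = 6 * (N:ℝ)^(2*d-2) := by rw [mul_assoc, e3]
  calc ∑ k ∈ Finset.Icc 1 N, (k : ℝ) * ((M^2 / k + k) ^ (d - 1))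
      ≤ ∑ k ∈ Finset.Icc 1 N, (∑ j ∈ Finset.range d,
          (((d-1).choose j : ℝ) * M^(2*j) + 3 * ((d-1).choose j) * (N:ℝ)^d)) :=
        Finset.sum_le_sum key
    _ = (N : ℝ) * ((M^2+1)^(d-1) + 3 * 2^(d-1) * (N:ℝ)^d) := by
        rw [Finset.sum_const, Nat.card_Icc]
        simp only [Finset.sum_add_distrib, hsumA, hsumB]
        rw [show N + 1 - 1 = N by omega]
        rw [nsmul_eq_mul]
    _ ≤ (N : ℝ) * (6 * (N:ℝ)^(2*d-2) + 6 * (N:ℝ)^(2*d-2)) := by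
        apply mul_le_mul_of_nonneg_left _ (by positivity)
        linarith
    _ = 12 * ((N:ℝ) * (N:ℝ)^(2*d-2)) := by ring
    _ = 12 * (N:ℝ)^(2*d-1) := by
        rw [← pow_succ', show (2*d-2)+1 = 2*d-1 by omega]

private lemma Bc_bounds (N k : ℕ) (hk1 : 1 ≤ k) (hkN : k ≤ N) :
    ((N:ℝ)+1)^2 / k ≤ (Bc (N+1) k : ℝ) ∧ (Bc (N+1) k : ℝ) ≤ ((N:ℝ)+1)^2 / k + k := by
  have hform := Bc_formula (N+1) k (by omega) (by omega)
  have hk0 : (0:ℝ) < (k:ℝ) := by exact_mod_cast hk1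
  have hcast : (k:ℝ) * (Bc (N+1) k : ℝ)
      = ((N:ℝ)+1)^2 + (((N+1) % k : ℕ) : ℝ) * (((k - (N+1) % k : ℕ)) : ℝ) := by
    exact_mod_cast congrArg (fun n : ℕ => (n : ℝ)) hform
  have hs1 : (((N+1) % k : ℕ) : ℝ) ≤ (k:ℝ) := by
    exact_mod_cast (Nat.mod_lt _ (by omega : 0 < k)).le
  have hs0 : (0:ℝ) ≤ (((N+1) % k : ℕ) : ℝ) := by positivity
  have ht1 : (((k - (N+1) % k : ℕ)) : ℝ) ≤ (k:ℝ) := by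
    exact_mod_cast Nat.sub_le _ _
  have ht0 : (0:ℝ) ≤ (((k - (N+1) % k : ℕ)) : ℝ) := by positivity
  constructor
  · rw [div_le_iff₀ hk0, mul_comm]
    nlinarith
  · have h2 : (Bc (N+1) k : ℝ) ≤ (((N:ℝ)+1)^2 + (k:ℝ)*(k:ℝ)) / k := by
      rw [le_div_iff₀ hk0]
      nlinarith
    have h3 : (((N:ℝ)+1)^2 + (k:ℝ)*(k:ℝ)) / k = ((N:ℝ)+1)^2/k + k := by
      field_simp
    linarith

end VisiblePairsAux

set_option maxHeartbeats 2000000 in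
/-- count of mutually visible pairs in the hypercube lattice. -/
theorem visible_pairs_count :
    ∃ C₀ : ℝ, 0 < C₀ ∧ ∀ d N : ℕ, 2 ≤ d → 3 * d ≤ N →
      |((Finset.univ.filter (fun p : (Fin d → Fin (N + 1)) × (Fin d → Fin (N + 1)) =>
           Finset.univ.gcd (fun i => (((p.1 i : ℕ) : ℤ) - ((p.2 i : ℕ) : ℤ)).natAbs) = 1)).card : ℝ)
        - (N : ℝ) ^ (2 * d) / (∑' n : ℕ, 1 / ((n : ℝ) + 1) ^ d)| ≤
      if d = 2 then C₀ * (N : ℝ) ^ 3 * Real.log N else C₀ * d * (N : ℝ) ^ (2 * d - 1) := by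
  refine ⟨100, by norm_num, ?_⟩
  intro d N hd hN
  have hN6 : 6 ≤ N := by omega
  have hN1 : 1 ≤ N := by omega
  have hNR : (6:ℝ) ≤ (N:ℝ) := by exact_mod_cast hN6
  have hN0 : (0:ℝ) < (N:ℝ) := by linarith
  have hdR : (2:ℝ) ≤ (d:ℝ) := by exact_mod_cast hd
  have hZ : (∑' n : ℕ, 1 / ((n : ℝ) + 1) ^ d) = Zd d := rfl
  rw [hZ]
  set M : ℝ := (N:ℝ) + 1 with hMdef
  have hM0 : (0:ℝ) < M := by rw [hMdef]; linarith
  -- cast the key identity to ℝ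
  have hcardR : ((Finset.univ.filter (fun p : (Fin d → Fin (N + 1)) × (Fin d → Fin (N + 1)) =>
        Finset.univ.gcd
          (fun i => (((p.1 i : ℕ) : ℤ) - ((p.2 i : ℕ) : ℤ)).natAbs) = 1)).card : ℝ)
      = ∑ k ∈ Finset.Icc 1 N,
          (moebius k : ℝ) * ((Bc (N + 1) k : ℝ) ^ d - M ^ d) := by
    have h := key_identity d N
    have := congrArg (fun z : ℤ => (z : ℝ)) h
    push_cast at this
    rw [hMdef]
    push_cast
    exact this
  -- the three sums
  set T1 : ℝ := ∑ k ∈ Finset.Icc 1 N,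
    (moebius k : ℝ) * ((Bc (N + 1) k : ℝ) ^ d - (M^2 / k) ^ d) with hT1def
  set T2 : ℝ := ∑ k ∈ Finset.Icc 1 N, (moebius k : ℝ) * (M^2 / k) ^ d with hT2def
  set T3 : ℝ := (∑ k ∈ Finset.Icc 1 N, (moebius k : ℝ)) * M ^ d with hT3def
  have hsplit : ∑ k ∈ Finset.Icc 1 N,
      (moebius k : ℝ) * ((Bc (N + 1) k : ℝ) ^ d - M ^ d) = T1 + T2 - T3 := by
    rw [hT1def, hT2def, hT3def, Finset.sum_mul, ← Finset.sum_add_distrib,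
      ← Finset.sum_sub_distrib]
    refine Finset.sum_congr rfl fun k _ => by ring
  -- bound T1
  have hBc : ∀ k ∈ Finset.Icc 1 N,
      M^2 / k ≤ (Bc (N+1) k : ℝ) ∧ (Bc (N+1) k : ℝ) ≤ M^2 / k + k := by
    intro k hk
    rw [Finset.mem_Icc] at hk
    rw [hMdef]
    exact Bc_bounds N k hk.1 hk.2
  have hT1 : |T1| ≤ 12 * d * (N:ℝ) ^ (2*d-1) := by
    have habs : |T1| ≤ ∑ k ∈ Finset.Icc 1 N,
        |(moebius k : ℝ) * ((Bc (N + 1) k : ℝ) ^ d - (M^2 / k) ^ d)| := by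
      rw [hT1def]
      exact Finset.abs_sum_le_sum_abs _ _
    have hterm : ∀ k ∈ Finset.Icc 1 N,
        |(moebius k : ℝ) * ((Bc (N + 1) k : ℝ) ^ d - (M^2 / k) ^ d)|
          ≤ (d:ℝ) * ((k:ℝ) * ((M^2 / k + k) ^ (d - 1))) := by
      intro k hk
      obtain ⟨hlo, hhi⟩ := hBc k hk
      rw [Finset.mem_Icc] at hk
      have hk1 : (1:ℝ) ≤ (k:ℝ) := by exact_mod_cast hk.1
      have hk0 : (0:ℝ) < (k:ℝ) := by linarith
      have hy0 : (0:ℝ) ≤ M^2 / k := by positivity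
      have hpow := pow_sub_pow_le (Bc (N+1) k : ℝ) (M^2 / k) hy0 hlo (d - 1)
      rw [show d - 1 + 1 = d by omega] at hpow
      have hd1 : ((d - 1 : ℕ) : ℝ) + 1 = (d:ℝ) := by
        have : (d - 1 : ℕ) + 1 = d := by omega
        exact_mod_cast this
      rw [hd1] at hpow
      have hnn : (0:ℝ) ≤ (Bc (N+1) k : ℝ) ^ d - (M^2 / k) ^ d := by
        have := pow_le_pow_left₀ hy0 hlo d
        linarith
      rw [abs_mul, abs_of_nonneg hnn]
      have hBpow : (Bc (N+1) k : ℝ) ^ (d-1) ≤ (M^2 / k + k) ^ (d-1) := by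
        apply pow_le_pow_left₀ (by positivity) hhi
      have hdiff : (Bc (N+1) k : ℝ) - M^2/k ≤ (k:ℝ) := by linarith
      have hchain : (Bc (N+1) k : ℝ) ^ d - (M^2 / k) ^ d
          ≤ (d:ℝ) * ((k:ℝ) * ((M^2 / k + k) ^ (d - 1))) := by
        calc (Bc (N+1) k : ℝ) ^ d - (M^2 / k) ^ d
            ≤ (d:ℝ) * ((Bc (N+1) k : ℝ) - M^2/k) * (Bc (N+1) k : ℝ) ^ (d-1) := hpow
          _ ≤ (d:ℝ) * (k:ℝ) * ((M^2 / k + k) ^ (d - 1)) := by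
              have h1 : (0:ℝ) ≤ (d:ℝ) := by linarith
              have h2 : (0:ℝ) ≤ (Bc (N+1) k : ℝ) ^ (d-1) := by positivity
              have h3 : (d:ℝ) * ((Bc (N+1) k : ℝ) - M^2/k) ≤ (d:ℝ) * (k:ℝ) :=
                mul_le_mul_of_nonneg_left hdiff h1
              calc (d:ℝ) * ((Bc (N+1) k : ℝ) - M^2/k) * (Bc (N+1) k : ℝ) ^ (d-1)
                  ≤ (d:ℝ) * (k:ℝ) * (Bc (N+1) k : ℝ) ^ (d-1) := by
                    apply mul_le_mul_of_nonneg_right h3 h2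
                _ ≤ (d:ℝ) * (k:ℝ) * ((M^2 / k + k) ^ (d - 1)) := by
                    apply mul_le_mul_of_nonneg_left hBpow (by positivity)
          _ = (d:ℝ) * ((k:ℝ) * ((M^2 / k + k) ^ (d - 1))) := by ring
      calc |(moebius k : ℝ)| * ((Bc (N+1) k : ℝ) ^ d - (M^2 / k) ^ d)
          ≤ 1 * ((Bc (N+1) k : ℝ) ^ d - (M^2 / k) ^ d) := by
            apply mul_le_mul_of_nonneg_right _ hnn
            have := moebius_abs_le k
            rwa [Real.norm_eq_abs] at this
        _ = (Bc (N+1) k : ℝ) ^ d - (M^2 / k) ^ d := by ring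
        _ ≤ _ := hchain
    calc |T1| ≤ ∑ k ∈ Finset.Icc 1 N,
          |(moebius k : ℝ) * ((Bc (N + 1) k : ℝ) ^ d - (M^2 / k) ^ d)| := habs
      _ ≤ ∑ k ∈ Finset.Icc 1 N, (d:ℝ) * ((k:ℝ) * ((M^2 / k + k) ^ (d - 1))) :=
          Finset.sum_le_sum hterm
      _ = (d:ℝ) * ∑ k ∈ Finset.Icc 1 N, (k:ℝ) * ((M^2 / k + k) ^ (d - 1)) := by
          rw [Finset.mul_sum]
      _ ≤ (d:ℝ) * (12 * (N:ℝ) ^ (2*d-1)) := by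
          apply mul_le_mul_of_nonneg_left _ (by linarith)
          rw [hMdef]
          exact error_sum_bound d N hd hN
      _ = 12 * d * (N:ℝ) ^ (2*d-1) := by ring
  -- bound T2
  have hT2eq : T2 = M^(2*d) * ∑ k ∈ Finset.Icc 1 N, (moebius k : ℝ) / (k:ℝ)^d := by
    rw [hT2def, Finset.mul_sum]
    refine Finset.sum_congr rfl fun k hk => ?_
    rw [Finset.mem_Icc] at hk
    have hk0 : (0:ℝ) < (k:ℝ) := by exact_mod_cast hk.1
    rw [div_pow, ← pow_mul]
    field_simp
  have hMpow : M^(2*d) ≤ 3 * (N:ℝ)^(2*d) := by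
    rw [hMdef]
    exact M_pow_le N d (2*d) hd hN (le_refl _)
  have hT2 : |T2 - M^(2*d) / Zd d| ≤ 3 * (N:ℝ)^(2*d-1) := by
    have hpc := partial_close d N hd hN1
    have : T2 - M^(2*d) / Zd d
        = M^(2*d) * ((∑ k ∈ Finset.Icc 1 N, (moebius k : ℝ) / (k:ℝ)^d) - 1 / Zd d) := by
      rw [hT2eq]
      ring
    rw [this, abs_mul, abs_of_pos (by positivity : (0:ℝ) < M^(2*d))]
    calc M^(2*d) * |(∑ k ∈ Finset.Icc 1 N, (moebius k : ℝ) / (k:ℝ)^d) - 1 / Zd d|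
        ≤ M^(2*d) * (1 / N) := by
          apply mul_le_mul_of_nonneg_left hpc (by positivity)
      _ ≤ (3 * (N:ℝ)^(2*d)) * (1 / N) := by
          apply mul_le_mul_of_nonneg_right hMpow (by positivity)
      _ = 3 * (N:ℝ)^(2*d-1) := by
          rw [show 2*d = (2*d-1)+1 by omega, pow_succ, Nat.add_sub_cancel]
          field_simp
  -- bound T3
  have hT3 : |T3| ≤ 3 * (N:ℝ)^(2*d-1) := by
    have hmu : |∑ k ∈ Finset.Icc 1 N, (moebius k : ℝ)| ≤ (N:ℝ) := by
      calc |∑ k ∈ Finset.Icc 1 N, (moebius k : ℝ)|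
          ≤ ∑ k ∈ Finset.Icc 1 N, |(moebius k : ℝ)| := Finset.abs_sum_le_sum_abs _ _
        _ ≤ ∑ k ∈ Finset.Icc 1 N, (1:ℝ) := by
            apply Finset.sum_le_sum
            intro k _
            have := moebius_abs_le k
            rwa [Real.norm_eq_abs] at this
        _ = (N:ℝ) := by
            rw [Finset.sum_const, Nat.card_Icc, show N + 1 - 1 = N by omega, nsmul_eq_mul,
              mul_one]
    have hMd : M^d ≤ 3 * (N:ℝ)^d := by
      rw [hMdef]
      exact M_pow_le N d d hd hN (by omega)
    rw [hT3def, abs_mul, abs_of_pos (by positivity : (0:ℝ) < M^d)]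
    calc |∑ k ∈ Finset.Icc 1 N, (moebius k : ℝ)| * M^d
        ≤ (N:ℝ) * M^d := by
          apply mul_le_mul_of_nonneg_right hmu (by positivity)
      _ ≤ (N:ℝ) * (3 * (N:ℝ)^d) := by
          apply mul_le_mul_of_nonneg_left hMd (by positivity)
      _ = 3 * (N:ℝ)^(d+1) := by
          rw [pow_succ]
          ring
      _ ≤ 3 * (N:ℝ)^(2*d-1) := by
          apply mul_le_mul_of_nonneg_left _ (by norm_num)
          apply pow_le_pow_right₀ (by linarith) (by omega)
  -- main term shift M -> N
  have hZ1 : (1:ℝ) ≤ Zd d := Zd_ge_one d hd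
  have hshift : |M^(2*d) / Zd d - (N:ℝ)^(2*d) / Zd d| ≤ 6 * d * (N:ℝ)^(2*d-1) := by
    have hNM : (N:ℝ)^(2*d) ≤ M^(2*d) := by
      apply pow_le_pow_left₀ (by linarith) (by rw [hMdef]; linarith)
    have hnum : M^(2*d) - (N:ℝ)^(2*d) ≤ 2*(d:ℝ) * (N:ℝ)^(2*d-1) * 3 := by
      have hps := pow_sub_pow_le M (N:ℝ) (by linarith) (by rw [hMdef]; linarith) (2*d-1)
      rw [show 2*d - 1 + 1 = 2*d by omega] at hps
      have hcast : ((2*d - 1 : ℕ) : ℝ) + 1 = 2*(d:ℝ) := by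
        have : (2*d - 1 : ℕ) + 1 = 2*d := by omega
        exact_mod_cast this
      rw [hcast] at hps
      have hMN1 : M - (N:ℝ) = 1 := by rw [hMdef]; ring
      rw [hMN1] at hps
      have hMp : M^(2*d-1) ≤ 3 * (N:ℝ)^(2*d-1) := by
        rw [hMdef]
        exact M_pow_le N d (2*d-1) hd hN (by omega)
      calc M^(2*d) - (N:ℝ)^(2*d) ≤ 2*(d:ℝ) * 1 * M^(2*d-1) := hps
        _ ≤ 2*(d:ℝ) * 1 * (3 * (N:ℝ)^(2*d-1)) := by
            apply mul_le_mul_of_nonneg_left hMp (by linarith)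
        _ = 2*(d:ℝ) * (N:ℝ)^(2*d-1) * 3 := by ring
    have h1 : M^(2*d) / Zd d - (N:ℝ)^(2*d) / Zd d = (M^(2*d) - (N:ℝ)^(2*d)) / Zd d := by
      ring
    have hZ0 : (0:ℝ) < Zd d := by linarith
    rw [h1, abs_of_nonneg (div_nonneg (by linarith) hZ0.le)]
    calc (M^(2*d) - (N:ℝ)^(2*d)) / Zd d ≤ M^(2*d) - (N:ℝ)^(2*d) :=
          div_le_self (by linarith) hZ1
      _ ≤ 2*(d:ℝ) * (N:ℝ)^(2*d-1) * 3 := hnum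
      _ = 6 * d * (N:ℝ)^(2*d-1) := by ring
  -- assemble
  have hfinal : |((Finset.univ.filter (fun p : (Fin d → Fin (N + 1)) × (Fin d → Fin (N + 1)) =>
        Finset.univ.gcd
          (fun i => (((p.1 i : ℕ) : ℤ) - ((p.2 i : ℕ) : ℤ)).natAbs) = 1)).card : ℝ)
      - (N : ℝ) ^ (2 * d) / Zd d| ≤ 24 * d * (N:ℝ)^(2*d-1) := by
    rw [hcardR, hsplit]
    have key : T1 + T2 - T3 - (N:ℝ)^(2*d) / Zd d
        = T1 + (T2 - M^(2*d)/Zd d) + (M^(2*d)/Zd d - (N:ℝ)^(2*d)/Zd d) + (-T3) := by ring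
    rw [key]
    calc |T1 + (T2 - M^(2*d)/Zd d) + (M^(2*d)/Zd d - (N:ℝ)^(2*d)/Zd d) + (-T3)|
        ≤ |T1 + (T2 - M^(2*d)/Zd d) + (M^(2*d)/Zd d - (N:ℝ)^(2*d)/Zd d)| + |(-T3)| :=
          abs_add_le _ _
      _ ≤ (|T1 + (T2 - M^(2*d)/Zd d)| + |M^(2*d)/Zd d - (N:ℝ)^(2*d)/Zd d|) + |(-T3)| := by
          have := abs_add_le (T1 + (T2 - M^(2*d)/Zd d)) (M^(2*d)/Zd d - (N:ℝ)^(2*d)/Zd d)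
          linarith
      _ ≤ ((|T1| + |T2 - M^(2*d)/Zd d|) + |M^(2*d)/Zd d - (N:ℝ)^(2*d)/Zd d|) + |(-T3)| := by
          have := abs_add_le T1 (T2 - M^(2*d)/Zd d)
          linarith
      _ ≤ ((12 * d * (N:ℝ)^(2*d-1) + 3 * (N:ℝ)^(2*d-1)) + 6 * d * (N:ℝ)^(2*d-1))
            + 3 * (N:ℝ)^(2*d-1) := by
          rw [abs_neg]
          linarith
      _ ≤ 24 * d * (N:ℝ)^(2*d-1) := by
          have hp : (0:ℝ) ≤ (N:ℝ)^(2*d-1) := by positivity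
          nlinarith
  split_ifs with hd2
  · -- d = 2
    subst hd2
    have hlog : (1:ℝ) ≤ Real.log N := by
      rw [Real.le_log_iff_exp_le hN0]
      have h1 := Real.exp_one_lt_d9
      linarith
    have h3 : (2*2 - 1 : ℕ) = 3 := by norm_num
    rw [h3] at hfinal
    have hNp : (0:ℝ) ≤ (N:ℝ)^3 := by positivity
    calc |((Finset.univ.filter (fun p : (Fin 2 → Fin (N + 1)) × (Fin 2 → Fin (N + 1)) =>
          Finset.univ.gcd
            (fun i => (((p.1 i : ℕ) : ℤ) - ((p.2 i : ℕ) : ℤ)).natAbs) = 1)).card : ℝ)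
        - (N : ℝ) ^ (2 * 2) / Zd 2| ≤ 24 * (2:ℕ) * (N:ℝ)^3 := hfinal
      _ = 48 * (N:ℝ)^3 := by norm_num
      _ ≤ 100 * (N:ℝ)^3 * Real.log N := by nlinarith
  · -- d ≥ 3
    calc |((Finset.univ.filter (fun p : (Fin d → Fin (N + 1)) × (Fin d → Fin (N + 1)) =>
          Finset.univ.gcd
            (fun i => (((p.1 i : ℕ) : ℤ) - ((p.2 i : ℕ) : ℤ)).natAbs) = 1)).card : ℝ)
        - (N : ℝ) ^ (2 * d) / Zd d| ≤ 24 * d * (N:ℝ)^(2*d-1) := hfinal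
      _ ≤ 100 * d * (N:ℝ)^(2*d-1) := by
          have hp : (0:ℝ) ≤ (N:ℝ)^(2*d-1) := by positivity
          nlinarith
end

section
/- Let p be a prime, let d = p−1, and let v, w ∈ {0,1,…,d}^{d+1} be vectors whose coordinates are each a permutation of {0,1,…,d}, with the coordinates of w a (nontrivial) cyclic rotation of the coordinates of v. Then gcd(v₀−w₀, v₁−w₁, …, v_d−w_d) = 1. -/
/-- if the coordinates of w are a nontrivial cyclic rotation of the
coordinates of a permutation vector v (entries enumerating {0,…,p−1}, p prime), then
the gcd of the coordinatewise differences equals 1. -/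
theorem gcd_diff_cyclic_rotation_eq_one (p : ℕ) (hp : p.Prime)
    (v : Equiv.Perm (Fin p)) (s : Fin p) (hs : s.val ≠ 0) :
    Finset.univ.gcd (fun i : Fin p => (((v (i + s) : ℕ) : ℤ) - ((v i : ℕ) : ℤ)).natAbs) = 1 := by
  obtain ⟨n, rfl⟩ : ∃ n, p = n + 1 := ⟨p - 1, (Nat.succ_pred_eq_of_pos hp.pos).symm⟩
  haveI : Fact (Nat.Prime (n+1)) := ⟨hp⟩
  set g := Finset.univ.gcd (fun i : Fin (n+1) => (((v (i + s) : ℕ) : ℤ) - ((v i : ℕ) : ℤ)).natAbs) with hg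
  have hdvd : ∀ i : Fin (n+1), (g:ℤ) ∣ ((v (i+s) : ℕ) : ℤ) - ((v i : ℕ) : ℤ) := by
    intro i
    have h := Finset.gcd_dvd (Finset.mem_univ i) (f := fun i : Fin (n+1) => (((v (i + s) : ℕ) : ℤ) - ((v i : ℕ) : ℤ)).natAbs)
    exact dvd_trans (Int.natCast_dvd_natCast.mpr h) (Int.natAbs_dvd.mpr dvd_rfl)
  have hA : ∀ (k : ℕ) (i : Fin (n+1)), (g:ℤ) ∣ ((v (i + k • s) : ℕ) : ℤ) - ((v i : ℕ) : ℤ) := by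
    intro k
    induction k with
    | zero => intro i; simp
    | succ k ih =>
      intro i
      have h1 := hdvd (i + k • s)
      have h2 := ih i
      have : i + (k+1) • s = (i + k • s) + s := by rw [succ_nsmul, ← add_assoc]
      rw [this]
      have := dvd_add h1 h2
      simpa using this
  have hB : ∀ i j : Fin (n+1), ∃ k : ℕ, i + k • s = j := by
    intro i j
    let s' : ZMod (n+1) := s
    let i' : ZMod (n+1) := i
    let j' : ZMod (n+1) := j
    have hval : ZMod.val s' ≠ 0 := hs
    have hsne : s' ≠ 0 := fun h => hval (by rw [h, ZMod.val_zero])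
    refine ⟨((j' - i') * s'⁻¹).val, ?_⟩
    show i' + (((j' - i') * s'⁻¹).val : ℕ) • s' = j'
    rw [nsmul_eq_mul, ZMod.natCast_val, ZMod.cast_id, mul_assoc,
      ZMod.inv_mul_of_unit _ hsne.isUnit, mul_one]
    ring
  have key : ∀ i j : Fin (n+1), (g:ℤ) ∣ ((v j : ℕ) : ℤ) - ((v i : ℕ) : ℤ) := by
    intro i j
    obtain ⟨k, hk⟩ := hB i j
    have h := hA k i
    rw [hk] at h
    exact h
  have h2 : (2:ℕ) ≤ n+1 := hp.two_le
  have h01 := key (v.symm ⟨0, by omega⟩) (v.symm ⟨1, by omega⟩)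
  simp only [Equiv.apply_symm_apply] at h01
  have : (g:ℤ) ∣ 1 := by simpa using h01
  exact_mod_cast Int.eq_one_of_dvd_one (by positivity) this
end

section
/- Let p be a prime. Then the number of distinct values of |n − n⁻¹| as n ranges over 1 ≤ n ≤ p−1 equals ⌊p/4⌋ + 1, where n⁻¹ is the representative in {1,…,p−1} of the inverse of n modulo p. -/
open Finset

namespace CIDV

def finv (p n : ℕ) : ℕ := ((n : ZMod p)⁻¹).val

def f (p n : ℕ) : ℕ := ((n : ℤ) - ((finv p n : ℕ) : ℤ)).natAbs

variable {p : ℕ} [hp : Fact p.Prime]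

lemma ppos : 0 < p := hp.out.pos

lemma cast_ne_zero {n : ℕ} (hn : n ∈ Icc 1 (p-1)) : (n : ZMod p) ≠ 0 := by
  rw [mem_Icc] at hn
  intro h
  rw [ZMod.natCast_eq_zero_iff] at h
  have := Nat.le_of_dvd (by omega) h
  have := hp.out.two_le
  omega

lemma val_cast {n : ℕ} (hn : n ∈ Icc 1 (p-1)) : ((n : ZMod p)).val = n := by
  rw [mem_Icc] at hn
  exact ZMod.val_cast_of_lt (by have := hp.out.two_le; omega)

lemma rep_inj {m n : ℕ} (hm : m ∈ Icc 1 (p-1)) (hn : n ∈ Icc 1 (p-1))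
    (h : (m : ZMod p) = (n : ZMod p)) : m = n := by
  have := val_cast hm; have := val_cast hn
  rw [← this, ← h, val_cast hm]

lemma cast_finv (n : ℕ) : ((finv p n : ℕ) : ZMod p) = ((n : ZMod p))⁻¹ := by
  have : NeZero p := ⟨ppos.ne'⟩
  exact ZMod.natCast_rightInverse _

lemma finv_mem {n : ℕ} (hn : n ∈ Icc 1 (p-1)) : finv p n ∈ Icc 1 (p-1) := by
  have : NeZero p := ⟨ppos.ne'⟩
  have h1 : ((n : ZMod p))⁻¹ ≠ 0 := inv_ne_zero (cast_ne_zero hn)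
  have h2 : ((n : ZMod p))⁻¹.val ≠ 0 := fun h => h1 ((ZMod.val_eq_zero _).mp h)
  have h3 : ((n : ZMod p))⁻¹.val < p := ZMod.val_lt _
  rw [mem_Icc]; unfold finv; omega

lemma finv_finv {n : ℕ} (hn : n ∈ Icc 1 (p-1)) : finv p (finv p n) = n := by
  have h : finv p (finv p n) = (((finv p n : ℕ) : ZMod p))⁻¹.val := rfl
  rw [h, cast_finv, inv_inv, val_cast hn]

lemma f_finv {n : ℕ} (hn : n ∈ Icc 1 (p-1)) : f p (finv p n) = f p n := by
  unfold f
  rw [finv_finv hn, ← Int.natAbs_neg, neg_sub]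

lemma psub_mem {n : ℕ} (hn : n ∈ Icc 1 (p-1)) : p - n ∈ Icc 1 (p-1) := by
  rw [mem_Icc] at hn ⊢; have := hp.out.two_le; omega

lemma cast_psub {n : ℕ} (hn : n ∈ Icc 1 (p-1)) : ((p - n : ℕ) : ZMod p) = -(n : ZMod p) := by
  rw [mem_Icc] at hn
  have h : n ≤ p := by have := hp.out.two_le; omega
  rw [Nat.cast_sub h, ZMod.natCast_self, zero_sub]

lemma finv_psub {n : ℕ} (hn : n ∈ Icc 1 (p-1)) : finv p (p - n) = p - finv p n := by
  have : NeZero p := ⟨ppos.ne'⟩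
  unfold finv
  rw [cast_psub hn, inv_neg, ZMod.neg_val]
  rw [if_neg (inv_ne_zero (cast_ne_zero hn))]

lemma f_psub {n : ℕ} (hn : n ∈ Icc 1 (p-1)) : f p (p - n) = f p n := by
  unfold f
  rw [finv_psub hn]
  have h1 : n ≤ p - 1 := (mem_Icc.mp hn).2
  have h2 : finv p n ≤ p - 1 := (mem_Icc.mp (finv_mem hn)).2
  have hp2 := hp.out.two_le
  have e1 : ((p - n : ℕ) : ℤ) = (p : ℤ) - n := by omega
  have e2 : ((p - finv p n : ℕ) : ℤ) = (p : ℤ) - finv p n := by omega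
  rw [e1, e2]
  rw [show (p : ℤ) - n - ((p : ℤ) - finv p n) = -((n : ℤ) - finv p n) by ring, Int.natAbs_neg]

lemma field_roots {K : Type} [Field K] {x a : K} (hx : x ≠ 0) (ha : a ≠ 0)
    (h : x - x⁻¹ = a - a⁻¹) : x = a ∨ x = -a⁻¹ := by
  have hx' : x * x⁻¹ = 1 := mul_inv_cancel₀ hx
  have ha' : a * a⁻¹ = 1 := mul_inv_cancel₀ ha
  have h0 : (x - a) * (x + a⁻¹) = 0 := by linear_combination x * h + hx' - ha'
  rcases mul_eq_zero.mp h0 with h1 | h1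
  · exact Or.inl (sub_eq_zero.mp h1)
  · exact Or.inr (eq_neg_of_add_eq_zero_left h1)

lemma fiber_subset {n m : ℕ} (hn : n ∈ Icc 1 (p-1)) (hm : m ∈ Icc 1 (p-1))
    (h : f p m = f p n) :
    m = n ∨ m = finv p n ∨ m = p - n ∨ m = p - finv p n := by
  have hx : (m : ZMod p) ≠ 0 := cast_ne_zero hm
  have ha : (n : ZMod p) ≠ 0 := cast_ne_zero hn
  have ha' : ((n : ZMod p))⁻¹ ≠ 0 := inv_ne_zero ha
  unfold f at h
  rcases Int.natAbs_eq_natAbs_iff.mp h with h' | h'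
  · -- m - m⁻¹ = n - n⁻¹ in ℤ, cast to ZMod p
    have hc : (m : ZMod p) - ((m : ZMod p))⁻¹ = (n : ZMod p) - ((n : ZMod p))⁻¹ := by
      have h2 := congrArg (fun z : ℤ => (z : ZMod p)) h'
      push_cast at h2
      rw [cast_finv, cast_finv] at h2
      exact h2
    rcases field_roots hx ha hc with h1 | h1
    · exact Or.inl (rep_inj hm hn h1)
    · right; right; right
      apply rep_inj hm (psub_mem (finv_mem hn))
      rw [cast_psub (finv_mem hn), cast_finv, h1]
  · -- m - m⁻¹ = -(n - n⁻¹)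
    have hc : (m : ZMod p) - ((m : ZMod p))⁻¹
        = ((n : ZMod p))⁻¹ - (((n : ZMod p))⁻¹)⁻¹ := by
      have h2 := congrArg (fun z : ℤ => (z : ZMod p)) h'
      push_cast at h2
      rw [cast_finv, cast_finv] at h2
      rw [inv_inv]
      linear_combination h2
    rcases field_roots hx ha' hc with h1 | h1
    · right; left
      apply rep_inj hm (finv_mem hn)
      rw [cast_finv, h1]
    · right; right; left
      apply rep_inj hm (psub_mem hn)
      rw [cast_psub hn, h1, inv_inv]

lemma fiber_eq {n : ℕ} (hn : n ∈ Icc 1 (p-1)) :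
    (Icc 1 (p-1)).filter (fun m => f p m = f p n)
      = {n, finv p n, p - n, p - finv p n} := by
  ext m
  simp only [mem_filter, mem_insert, mem_singleton]
  constructor
  · rintro ⟨hm, hfm⟩
    exact fiber_subset hn hm hfm
  · rintro (rfl | rfl | rfl | rfl)
    · exact ⟨hn, rfl⟩
    · exact ⟨finv_mem hn, f_finv hn⟩
    · exact ⟨psub_mem hn, f_psub hn⟩
    · exact ⟨psub_mem (finv_mem hn), by rw [f_psub (finv_mem hn), f_finv hn]⟩

lemma finv_one (hp2 : 2 ≤ p) : finv p 1 = 1 := by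
  unfold finv
  rw [Nat.cast_one, inv_one, ZMod.val_one_eq_one_mod, Nat.mod_eq_of_lt hp2]

lemma f_one (hp2 : 2 ≤ p) : f p 1 = 0 := by
  unfold f
  rw [finv_one hp2]
  simp

lemma one_mem (hp2 : 2 ≤ p) : (1 : ℕ) ∈ Icc 1 (p-1) := by rw [mem_Icc]; omega

lemma fiber_zero (hp2 : 2 ≤ p) :
    (Icc 1 (p-1)).filter (fun m => f p m = 0) = {1, p - 1} := by
  have h1 := fiber_eq (p := p) (one_mem hp2)
  rw [f_one hp2] at h1
  rw [h1, finv_one hp2]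
  ext m
  simp only [mem_insert, mem_singleton]
  omega

end CIDV

namespace CIDV
variable {p : ℕ} [hp : Fact p.Prime]

lemma f_eq_zero {n : ℕ} : f p n = 0 ↔ n = finv p n := by
  unfold f; rw [Int.natAbs_eq_zero, sub_eq_zero, Nat.cast_inj]

lemma finv_eq_psub {n : ℕ} (hn : n ∈ Icc 1 (p-1)) (hsq : ((n : ZMod p))^2 = -1) :
    finv p n = p - n := by
  apply rep_inj (finv_mem hn) (psub_mem hn)
  rw [cast_finv, cast_psub hn]
  apply inv_eq_of_mul_eq_one_right
  calc (n : ZMod p) * (-(n : ZMod p)) = -((n : ZMod p))^2 := by ring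
    _ = 1 := by rw [hsq]; ring

lemma card_four {n : ℕ} (hn : n ∈ Icc 1 (p-1)) (hodd : p % 2 = 1)
    (hne : n ≠ finv p n) (hsq : ((n : ZMod p))^2 ≠ -1) :
    ({n, finv p n, p - n, p - finv p n} : Finset ℕ).card = 4 := by
  have hb1 := mem_Icc.mp hn
  have hb2 := mem_Icc.mp (finv_mem (p := p) hn)
  have ha : (n : ZMod p) ≠ 0 := cast_ne_zero hn
  have h13 : n ≠ p - n := by omega
  have h24 : finv p n ≠ p - finv p n := by omega
  have h34 : p - n ≠ p - finv p n := by omega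
  have h14 : n ≠ p - finv p n := by
    intro h
    apply hsq
    have hc : (n : ZMod p) = -((n : ZMod p))⁻¹ := by
      have h2 := congrArg (fun k : ℕ => (k : ZMod p)) h
      rw [cast_psub (finv_mem hn), cast_finv] at h2
      exact h2
    calc ((n : ZMod p))^2 = (n : ZMod p) * (n : ZMod p) := sq _
      _ = (n : ZMod p) * (-((n : ZMod p))⁻¹) := by rw [← hc]
      _ = -((n : ZMod p) * ((n : ZMod p))⁻¹) := by ring
      _ = -1 := by rw [mul_inv_cancel₀ ha]
  have h23 : finv p n ≠ p - n := by
    intro h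
    apply hsq
    have hc : ((n : ZMod p))⁻¹ = -(n : ZMod p) := by
      have h2 := congrArg (fun k : ℕ => (k : ZMod p)) h
      rw [cast_psub hn, cast_finv] at h2
      exact h2
    have h3 : (n : ZMod p) * ((n : ZMod p))⁻¹ = (n : ZMod p) * (-(n : ZMod p)) := by rw [hc]
    rw [mul_inv_cancel₀ ha] at h3
    linear_combination h3
  rw [card_insert_of_notMem, card_insert_of_notMem, card_insert_of_notMem, card_singleton]
  · simp only [mem_singleton]; exact h34
  · simp only [mem_insert, mem_singleton]; push_neg; exact ⟨h23, h24⟩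
  · simp only [mem_insert, mem_singleton]; push_neg; exact ⟨hne, h13, h14⟩

theorem main_odd (hp2 : p ≠ 2) :
    ((Icc 1 (p-1)).image (f p)).card = p / 4 + 1 := by
  have hple : 2 ≤ p := hp.out.two_le
  have hodd : p % 2 = 1 := Nat.odd_iff.mp (hp.out.odd_of_ne_two hp2)
  have hcard_s : (Icc 1 (p-1)).card = p - 1 := by rw [Nat.card_Icc]; omega
  have hsum : p - 1 = ∑ b ∈ (Icc 1 (p-1)).image (f p),
      ((Icc 1 (p-1)).filter (fun m => f p m = b)).card := by
    conv_lhs => rw [← hcard_s]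
    exact Finset.card_eq_sum_card_image (f p) (Icc 1 (p-1))
  have h0I : 0 ∈ (Icc 1 (p-1)).image (f p) :=
    mem_image.mpr ⟨1, one_mem hple, f_one hple⟩
  have hfib0 : ((Icc 1 (p-1)).filter (fun m => f p m = 0)).card = 2 := by
    rw [fiber_zero hple]
    rw [card_insert_of_notMem (by simp only [mem_singleton]; omega), card_singleton]
  have hIpos : 1 ≤ ((Icc 1 (p-1)).image (f p)).card := card_pos.mpr ⟨0, h0I⟩
  rcases show p % 4 = 1 ∨ p % 4 = 3 by omega with h4 | h4
  · -- p ≡ 1 mod 4 : there is a sqrt of -1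
    obtain ⟨r, hr⟩ : IsSquare (-1 : ZMod p) :=
      ZMod.exists_sq_eq_neg_one_iff.mpr (by omega)
    have hr2 : r^2 = -1 := by rw [sq]; exact hr.symm
    have hrne : r ≠ 0 := by
      intro h; rw [h] at hr2
      simp only [ne_eq, zero_pow, OfNat.ofNat_ne_zero, not_false_eq_true] at hr2
      exact one_ne_zero (neg_eq_zero.mp hr2.symm)
    haveI : NeZero p := ⟨by omega⟩
    have hn₀cast : ((r.val : ℕ) : ZMod p) = r := ZMod.natCast_rightInverse r
    have hn₀ : r.val ∈ Icc 1 (p-1) := by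
      have h1 : r.val ≠ 0 := fun h => hrne ((ZMod.val_eq_zero _).mp h)
      have h2 : r.val < p := ZMod.val_lt _
      rw [mem_Icc]; omega
    have hb₀1 := mem_Icc.mp hn₀
    have hsq₀ : ((r.val : ℕ) : ZMod p)^2 = -1 := by rw [hn₀cast]; exact hr2
    have hfinv₀ : finv p r.val = p - r.val := finv_eq_psub hn₀ hsq₀
    have hne₀ : r.val ≠ finv p r.val := by
      intro h
      have hc : r = r⁻¹ := by
        have h2 := congrArg (fun k : ℕ => (k : ZMod p)) h
        rw [cast_finv, hn₀cast] at h2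
        exact h2
      have h3 : r * r = 1 := by
        nth_rewrite 2 [hc]; exact mul_inv_cancel₀ hrne
      rw [← sq, hr2] at h3
      have h4 : ((2 : ℕ) : ZMod p) = 0 := by push_cast; linear_combination -h3
      rw [ZMod.natCast_eq_zero_iff] at h4
      have := Nat.le_of_dvd (by norm_num) h4
      omega
    have hb₀0 : f p r.val ≠ 0 := fun h => hne₀ (f_eq_zero.mp h)
    have hb₀I : f p r.val ∈ (Icc 1 (p-1)).image (f p) := mem_image.mpr ⟨r.val, hn₀, rfl⟩
    have hfib₀ : ((Icc 1 (p-1)).filter (fun m => f p m = f p r.val)).card = 2 := by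
      rw [fiber_eq hn₀, hfinv₀]
      have hpn : p - (p - r.val) = r.val := by omega
      rw [hpn]
      have hset : ({r.val, p - r.val, p - r.val, r.val} : Finset ℕ) = {r.val, p - r.val} := by
        ext m
        simp only [mem_insert, mem_singleton]
        tauto
      rw [hset, card_insert_of_notMem (by simp only [mem_singleton]; omega), card_singleton]
    -- all other fibers have size 4
    have hfour : ∀ b ∈ (((Icc 1 (p-1)).image (f p)).erase 0).erase (f p r.val),
        ((Icc 1 (p-1)).filter (fun m => f p m = b)).card = 4 := by
      intro b hb
      obtain ⟨hbb₀, hb'⟩ := mem_erase.mp hb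
      obtain ⟨hb0, hbI⟩ := mem_erase.mp hb'
      obtain ⟨n, hn, rfl⟩ := mem_image.mp hbI
      have hne : n ≠ finv p n := fun h => hb0 (f_eq_zero.mpr h)
      have hsqn : ((n : ZMod p))^2 ≠ -1 := by
        intro h
        have hroot : ((n : ZMod p) - r) * ((n : ZMod p) + r) = 0 := by
          linear_combination h - hr2
        rcases mul_eq_zero.mp hroot with h1 | h1
        · have : n = r.val := rep_inj hn hn₀ (by rw [hn₀cast]; exact sub_eq_zero.mp h1)
          exact hbb₀ (by rw [this])
        · have h2 : (n : ZMod p) = ((p - r.val : ℕ) : ZMod p) := by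
            rw [cast_psub hn₀, hn₀cast]
            exact eq_neg_of_add_eq_zero_left h1
          have h3 : n = p - r.val := rep_inj hn (psub_mem hn₀) h2
          apply hbb₀
          rw [h3, f_psub hn₀]
      rw [fiber_eq hn]
      exact card_four hn hodd hne hsqn
    have hb₀e : f p r.val ∈ ((Icc 1 (p-1)).image (f p)).erase 0 :=
      mem_erase.mpr ⟨hb₀0, hb₀I⟩
    have hs1 : ∑ b ∈ (((Icc 1 (p-1)).image (f p)).erase 0).erase (f p r.val),
        ((Icc 1 (p-1)).filter (fun m => f p m = b)).card
        = ((((Icc 1 (p-1)).image (f p)).erase 0).erase (f p r.val)).card * 4 :=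
      Finset.sum_const_nat hfour
    have hs2 := Finset.sum_erase_add (((Icc 1 (p-1)).image (f p)).erase 0)
      (fun b => ((Icc 1 (p-1)).filter (fun m => f p m = b)).card) hb₀e
    have hs3 := Finset.sum_erase_add ((Icc 1 (p-1)).image (f p))
      (fun b => ((Icc 1 (p-1)).filter (fun m => f p m = b)).card) h0I
    have hc1 : (((Icc 1 (p-1)).image (f p)).erase 0).card
        = ((Icc 1 (p-1)).image (f p)).card - 1 := card_erase_of_mem h0I
    have hc2 : ((((Icc 1 (p-1)).image (f p)).erase 0).erase (f p r.val)).card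
        = (((Icc 1 (p-1)).image (f p)).erase 0).card - 1 := card_erase_of_mem hb₀e
    have hc3 : 1 ≤ (((Icc 1 (p-1)).image (f p)).erase 0).card := card_pos.mpr ⟨_, hb₀e⟩
    omega
  · -- p ≡ 3 mod 4 : no sqrt of -1
    have hns : ∀ n : ℕ, ((n : ZMod p))^2 ≠ -1 := by
      intro n h
      have : IsSquare (-1 : ZMod p) := ⟨(n : ZMod p), by rw [← h]; ring⟩
      exact (ZMod.exists_sq_eq_neg_one_iff.mp this) h4
    have hfour : ∀ b ∈ ((Icc 1 (p-1)).image (f p)).erase 0,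
        ((Icc 1 (p-1)).filter (fun m => f p m = b)).card = 4 := by
      intro b hb
      obtain ⟨hb0, hbI⟩ := mem_erase.mp hb
      obtain ⟨n, hn, rfl⟩ := mem_image.mp hbI
      have hne : n ≠ finv p n := fun h => hb0 (f_eq_zero.mpr h)
      rw [fiber_eq hn]
      exact card_four hn hodd hne (hns n)
    have hs1 : ∑ b ∈ ((Icc 1 (p-1)).image (f p)).erase 0,
        ((Icc 1 (p-1)).filter (fun m => f p m = b)).card
        = (((Icc 1 (p-1)).image (f p)).erase 0).card * 4 :=
      Finset.sum_const_nat hfour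
    have hs3 := Finset.sum_erase_add ((Icc 1 (p-1)).image (f p))
      (fun b => ((Icc 1 (p-1)).filter (fun m => f p m = b)).card) h0I
    have hc1 : (((Icc 1 (p-1)).image (f p)).erase 0).card
        = ((Icc 1 (p-1)).image (f p)).card - 1 := card_erase_of_mem h0I
    omega

end CIDV

/-- the number of distinct values of |n − n⁻¹| for 1 ≤ n ≤ p−1 is ⌊p/4⌋+1. -/
theorem card_inverse_diff_values (p : ℕ) (hp : p.Prime) :
    ((Finset.Icc 1 (p - 1)).image
        (fun n : ℕ => ((n : ℤ) - ((((n : ZMod p)⁻¹).val : ℕ) : ℤ)).natAbs)).card = p / 4 + 1 := by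
  by_cases h2 : p = 2
  · subst h2; decide
  · haveI : Fact p.Prime := ⟨hp⟩
    exact CIDV.main_odd h2
end

section
/- Let d ≥ 3 and for 0 ≤ h ≤ d define b_h ∈ ℤ^{d+1} by: all coordinates of b_h equal h, except coordinate h−1 (mod d+1) which equals h−1 and coordinate h+1 (mod d+1) which equals h+1. Then for all 1 ≤ j, k ≤ d, the normalized distance d^{−3/2}·dist(b_j, b_k) = |k−j|/d + O(1/d), with absolute implied constant; in particular the closure of the set of normalized distances between points of B = {b₀,…,b_d} over all d is the interval [0,1]. -/
/-- The vertices of the diagonal polytope: `diagB d h` has all coordinates equal to `h`,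
except coordinate `h−1 (mod d+1)` which is `h−1` and coordinate `h+1 (mod d+1)` which is `h+1`. -/
noncomputable def diagB (d h : ℕ) (i : Fin (d + 1)) : ℤ :=
  if i.val = (h + d) % (d + 1) then (h : ℤ) - 1
  else if i.val = (h + 1) % (d + 1) then (h : ℤ) + 1
  else (h : ℤ)

lemma sum_ind (d a : ℕ) (ha : a < d + 1) (c : ℝ) :
    ∑ i : Fin (d + 1), (if i.val = a then c else 0) = c := by
  have h : ∀ i : Fin (d + 1), (if i.val = a then c else 0)
      = if i = ⟨a, ha⟩ then c else 0 := by
    intro i; congr 1; simp [Fin.ext_iff]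
  simp_rw [h]
  simp

lemma diagB_eq (d h : ℕ) (hd : 2 ≤ d) (i : Fin (d + 1)) :
    (diagB d h i : ℝ) = h + (if i.val = (h + d) % (d + 1) then (-1 : ℝ) else 0)
      + (if i.val = (h + 1) % (d + 1) then (1 : ℝ) else 0) := by
  have hne : (h + d) % (d + 1) ≠ (h + 1) % (d + 1) := by
    intro hc
    have h1 : d % (d + 1) = 1 % (d + 1) :=
      (Nat.ModEq.add_left_cancel' h hc : Nat.ModEq (d+1) d 1)
    rw [Nat.mod_eq_of_lt (by omega), Nat.mod_eq_of_lt (by omega)] at h1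
    omega
  unfold diagB
  split_ifs with h1 h2 <;> push_cast <;> try ring
  all_goals (exfalso; apply hne; omega)

lemma sum_bounds (d j k : ℕ) (hd : 3 ≤ d) :
    ((d : ℝ) + 1) * ((j : ℝ) - k) ^ 2 ≤
      (∑ i : Fin (d + 1), ((diagB d j i : ℝ) - (diagB d k i : ℝ)) ^ 2) ∧
    (∑ i : Fin (d + 1), ((diagB d j i : ℝ) - (diagB d k i : ℝ)) ^ 2) ≤
      ((d : ℝ) + 1) * ((j : ℝ) - k) ^ 2 + 16 := by
  set m : ℝ := (j : ℝ) - k with hm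
  set a1 := (j + d) % (d + 1)
  set b1 := (j + 1) % (d + 1)
  set a2 := (k + d) % (d + 1)
  set b2 := (k + 1) % (d + 1)
  have ha1 : a1 < d + 1 := Nat.mod_lt _ (by omega)
  have hb1 : b1 < d + 1 := Nat.mod_lt _ (by omega)
  have ha2 : a2 < d + 1 := Nat.mod_lt _ (by omega)
  have hb2 : b2 < d + 1 := Nat.mod_lt _ (by omega)
  set w : Fin (d+1) → ℝ := fun i => if i.val = a1 then (-1 : ℝ) else 0 with hw
  set x : Fin (d+1) → ℝ := fun i => if i.val = b1 then (1 : ℝ) else 0 with hx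
  set y : Fin (d+1) → ℝ := fun i => if i.val = a2 then (1 : ℝ) else 0 with hy
  set z : Fin (d+1) → ℝ := fun i => if i.val = b2 then (-1 : ℝ) else 0 with hz
  have hdiff : ∀ i : Fin (d+1),
      (diagB d j i : ℝ) - (diagB d k i : ℝ) = m + (w i + x i + y i + z i) := by
    intro i
    rw [diagB_eq d j (by omega) i, diagB_eq d k (by omega) i]
    simp only [hw, hx, hy, hz]
    split_ifs <;> ring
  have hsum : ∀ f : Fin (d+1) → ℝ, ∑ i, (f i) = ∑ i, f i := fun _ => rfl
  have hsw : ∑ i, w i = -1 := sum_ind d a1 ha1 (-1)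
  have hsx : ∑ i, x i = 1 := sum_ind d b1 hb1 1
  have hsy : ∑ i, y i = 1 := sum_ind d a2 ha2 1
  have hsz : ∑ i, z i = -1 := sum_ind d b2 hb2 (-1)
  have hsw2 : ∑ i, (w i) ^ 2 = 1 := by
    have : ∀ i, (w i) ^ 2 = if i.val = a1 then (1:ℝ) else 0 := by
      intro i; simp only [hw]; split_ifs <;> norm_num
    simp_rw [this]; exact sum_ind d a1 ha1 1
  have hsx2 : ∑ i, (x i) ^ 2 = 1 := by
    have : ∀ i, (x i) ^ 2 = if i.val = b1 then (1:ℝ) else 0 := by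
      intro i; simp only [hx]; split_ifs <;> norm_num
    simp_rw [this]; exact sum_ind d b1 hb1 1
  have hsy2 : ∑ i, (y i) ^ 2 = 1 := by
    have : ∀ i, (y i) ^ 2 = if i.val = a2 then (1:ℝ) else 0 := by
      intro i; simp only [hy]; split_ifs <;> norm_num
    simp_rw [this]; exact sum_ind d a2 ha2 1
  have hsz2 : ∑ i, (z i) ^ 2 = 1 := by
    have : ∀ i, (z i) ^ 2 = if i.val = b2 then (1:ℝ) else 0 := by
      intro i; simp only [hz]; split_ifs <;> norm_num
    simp_rw [this]; exact sum_ind d b2 hb2 1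
  have hexp : (∑ i : Fin (d + 1), ((diagB d j i : ℝ) - (diagB d k i : ℝ)) ^ 2)
      = (d + 1) * m ^ 2 + ∑ i, (w i + x i + y i + z i) ^ 2 := by
    simp_rw [hdiff]
    have : ∀ i : Fin (d+1), (m + (w i + x i + y i + z i)) ^ 2
        = m ^ 2 + 2 * m * (w i + x i + y i + z i) + (w i + x i + y i + z i) ^ 2 := by
      intro i; ring
    simp_rw [this]
    rw [Finset.sum_add_distrib, Finset.sum_add_distrib, Finset.sum_const]
    simp_rw [mul_add, Finset.sum_add_distrib, ← Finset.mul_sum]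
    rw [hsw, hsx, hsy, hsz]
    simp [Finset.card_univ]
  constructor
  · rw [hexp]
    have : (0:ℝ) ≤ ∑ i, (w i + x i + y i + z i) ^ 2 :=
      Finset.sum_nonneg fun i _ => sq_nonneg _
    linarith
  · rw [hexp]
    have hb : ∑ i, (w i + x i + y i + z i) ^ 2 ≤ 16 := by
      have hpt : ∀ i : Fin (d+1), (w i + x i + y i + z i) ^ 2
          ≤ 4 * ((w i)^2 + (x i)^2 + (y i)^2 + (z i)^2) := by
        intro i
        nlinarith [sq_nonneg (w i - x i), sq_nonneg (w i - y i), sq_nonneg (w i - z i),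
          sq_nonneg (x i - y i), sq_nonneg (x i - z i), sq_nonneg (y i - z i)]
      calc ∑ i, (w i + x i + y i + z i) ^ 2
          ≤ ∑ i, 4 * ((w i)^2 + (x i)^2 + (y i)^2 + (z i)^2) :=
            Finset.sum_le_sum fun i _ => hpt i
        _ = 16 := by
            simp_rw [mul_add, Finset.sum_add_distrib, ← Finset.mul_sum]
            rw [hsw2, hsx2, hsy2, hsz2]; norm_num
    linarith

lemma sqrt_bound (d : ℕ) (m S : ℝ) (hd : 3 ≤ d) (hm : |m| ≤ d)
    (h1 : ((d:ℝ) + 1) * m ^ 2 ≤ S) (h2 : S ≤ ((d:ℝ) + 1) * m ^ 2 + 16) :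
    |Real.sqrt S / (d : ℝ) ^ ((3 : ℝ) / 2) - |m| / d| ≤ 9 / d := by
  have hd0 : (0:ℝ) < d := by positivity
  have ht0 : (0:ℝ) < Real.sqrt d := Real.sqrt_pos.mpr hd0
  set t := Real.sqrt d with htdef
  have ht2 : t ^ 2 = d := Real.sq_sqrt hd0.le
  have hpow : (d : ℝ) ^ ((3 : ℝ) / 2) = d * t := by
    rw [htdef, show (3:ℝ)/2 = 1 + 1/2 by norm_num, Real.rpow_add hd0, Real.rpow_one,
      Real.sqrt_eq_rpow]
  -- lower bound: |m| * t ≤ sqrt S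
  have hL : |m| * t ≤ Real.sqrt S := by
    have : ((d:ℝ)) * m ^ 2 ≤ S := by nlinarith [sq_nonneg m]
    calc |m| * t = Real.sqrt (m^2) * Real.sqrt d := by rw [Real.sqrt_sq_eq_abs]
      _ = Real.sqrt (d * m^2) := by rw [← Real.sqrt_mul (sq_nonneg m), mul_comm]
      _ ≤ Real.sqrt S := Real.sqrt_le_sqrt this
  -- upper: sqrt S ≤ |m| * t + 5 t
  have hU : Real.sqrt S ≤ |m| * t + 5 * t := by
    have hs1 : Real.sqrt S ≤ Real.sqrt (((d:ℝ)+1) * m^2) + 4 := by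
      have hA : (0:ℝ) ≤ ((d:ℝ)+1) * m^2 := by positivity
      calc Real.sqrt S ≤ Real.sqrt (((d:ℝ)+1) * m^2 + 16) := Real.sqrt_le_sqrt h2
        _ ≤ Real.sqrt (((d:ℝ)+1) * m^2) + 4 := by
            apply Real.sqrt_le_iff.mpr
            constructor
            · positivity
            · nlinarith [Real.sq_sqrt hA, Real.sqrt_nonneg (((d:ℝ)+1) * m^2)]
    have hs2 : Real.sqrt (((d:ℝ)+1) * m^2) ≤ |m| * t + t := by
      have e1 : Real.sqrt (((d:ℝ)+1) * m^2) = |m| * Real.sqrt ((d:ℝ)+1) := by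
        rw [mul_comm, Real.sqrt_mul (sq_nonneg m), Real.sqrt_sq_eq_abs]
      rw [e1]
      have e2 : (d:ℝ) * Real.sqrt ((d:ℝ)+1) ≤ ((d:ℝ)+1) * t := by
        have l1 : (d:ℝ) * Real.sqrt ((d:ℝ)+1) = Real.sqrt ((d:ℝ)^2 * ((d:ℝ)+1)) := by
          rw [Real.sqrt_mul (by positivity), Real.sqrt_sq hd0.le]
        have l2 : ((d:ℝ)+1) * t = Real.sqrt (((d:ℝ)+1)^2 * d) := by
          rw [Real.sqrt_mul (by positivity), Real.sqrt_sq (by positivity)]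
        rw [l1, l2]
        apply Real.sqrt_le_sqrt
        nlinarith [hd0]
      have e3 : |m| * Real.sqrt ((d:ℝ)+1) ≤ |m| * t + |m| * (Real.sqrt ((d:ℝ)+1) - t) := by
        ring_nf; rfl
      have e4 : (0:ℝ) ≤ Real.sqrt ((d:ℝ)+1) - t := by
        have := Real.sqrt_le_sqrt (show (d:ℝ) ≤ (d:ℝ)+1 by linarith)
        simpa [htdef] using this
      have e5 : |m| * (Real.sqrt ((d:ℝ)+1) - t) ≤ (d:ℝ) * (Real.sqrt ((d:ℝ)+1) - t) :=
        mul_le_mul_of_nonneg_right hm e4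
      nlinarith [abs_nonneg m]
    have ht1 : (1:ℝ) ≤ t := by
      rw [htdef, Real.one_le_sqrt]
      · exact_mod_cast (by omega : 1 ≤ d)
    have h4t : (4:ℝ) ≤ 4 * t := by nlinarith
    linarith
  -- combine
  rw [hpow]
  have key1 : |m| / d = |m| * t / (d * t) := by
    field_simp
  rw [key1, div_sub_div_same, abs_div, abs_of_pos (by positivity : (0:ℝ) < d * t)]
  rw [div_le_div_iff₀ (by positivity) hd0]
  have habs : |Real.sqrt S - |m| * t| ≤ 5 * t := by
    rw [abs_le]; constructor <;> linarith
  calc |Real.sqrt S - |m| * t| * d ≤ 5 * t * d := by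
        apply mul_le_mul_of_nonneg_right habs hd0.le
    _ ≤ 9 * (d * t) := by nlinarith [ht0]

lemma key (d j k : ℕ) (hd : 3 ≤ d) (hj1 : 1 ≤ j) (hj : j ≤ d) (hk1 : 1 ≤ k) (hk : k ≤ d) :
    |Real.sqrt (∑ i : Fin (d + 1), ((diagB d j i : ℝ) - (diagB d k i : ℝ)) ^ 2)
        / (d : ℝ) ^ ((3 : ℝ) / 2) - |(k : ℝ) - (j : ℝ)| / d| ≤ 9 / d := by
  obtain ⟨h1, h2⟩ := sum_bounds d j k hd
  have hm : |(j : ℝ) - k| ≤ d := by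
    rw [abs_le]
    constructor
    · have : (1:ℝ) ≤ j := by exact_mod_cast hj1
      have : (k:ℝ) ≤ d := by exact_mod_cast hk
      linarith
    · have : (j:ℝ) ≤ d := by exact_mod_cast hj
      have : (1:ℝ) ≤ k := by exact_mod_cast hk1
      linarith
  have := sqrt_bound d ((j:ℝ) - k) _ hd hm h1 h2
  rwa [abs_sub_comm ((j:ℝ)) (k:ℝ)] at this

/-- the normalized distances d^{−3/2}·dist(b_j, b_k) equal |k−j|/d + O(1/d),
and consequently the closure of the set of normalized distances over all d is [0,1]. -/
theorem diagB_dist :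
    (∃ C : ℝ, 0 < C ∧ ∀ d j k : ℕ, 3 ≤ d → 1 ≤ j → j ≤ d → 1 ≤ k → k ≤ d →
      |Real.sqrt (∑ i : Fin (d + 1), ((diagB d j i : ℝ) - (diagB d k i : ℝ)) ^ 2)
          / (d : ℝ) ^ ((3 : ℝ) / 2)
        - |(k : ℝ) - (j : ℝ)| / d| ≤ C / d) ∧
    (∀ y : ℝ, 0 ≤ y → y ≤ 1 → ∀ ε : ℝ, 0 < ε → ∃ d j k : ℕ, 3 ≤ d ∧ j ≤ d ∧ k ≤ d ∧
      |Real.sqrt (∑ i : Fin (d + 1), ((diagB d j i : ℝ) - (diagB d k i : ℝ)) ^ 2)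
          / (d : ℝ) ^ ((3 : ℝ) / 2) - y| < ε) := by
  constructor
  · exact ⟨9, by norm_num, fun d j k hd hj1 hj hk1 hk => key d j k hd hj1 hj hk1 hk⟩
  · intro y hy0 hy1 ε hε
    set d : ℕ := max 3 ⌈12 / ε⌉₊ with hddef
    have hd3 : 3 ≤ d := le_max_left _ _
    have hd0 : (0:ℝ) < d := by positivity
    have hdε : 12 / ε ≤ d := by
      calc (12:ℝ) / ε ≤ ⌈12 / ε⌉₊ := Nat.le_ceil _
        _ ≤ d := by exact_mod_cast le_max_right 3 _
    have h12 : (12:ℝ) ≤ ε * d := by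
      rw [div_le_iff₀ hε] at hdε
      linarith [hdε]
    set m : ℕ := ⌊y * ((d : ℝ) - 1)⌋₊ with hmdef
    have hdm1 : ((d - 1 : ℕ) : ℝ) = (d : ℝ) - 1 := by
      have : 1 ≤ d := by omega
      push_cast [this]; ring
    have hmle : m ≤ d - 1 := by
      rw [hmdef]
      calc ⌊y * ((d : ℝ) - 1)⌋₊ ≤ ⌊((d - 1 : ℕ) : ℝ)⌋₊ := by
            apply Nat.floor_le_floor
            rw [hdm1]
            nlinarith [hd0]
        _ = d - 1 := Nat.floor_natCast _
    refine ⟨d, 1, 1 + m, hd3, by omega, by omega, ?_⟩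
    have hkey := key d 1 (1 + m) hd3 le_rfl (by omega) (by omega) (by omega)
    have hcast : |((1 + m : ℕ) : ℝ) - (1 : ℕ)| = m := by
      push_cast
      rw [show (1:ℝ) + m - 1 = m by ring, abs_of_nonneg (by positivity)]
    rw [hcast] at hkey
    have hfl : (m : ℝ) ≤ y * ((d:ℝ) - 1) := Nat.floor_le (by nlinarith [hd0])
    have hfu : y * ((d:ℝ) - 1) < m + 1 := Nat.lt_floor_add_one _
    have hclose : |(m : ℝ) / d - y| ≤ 2 / d := by
      have e : (m : ℝ) / d - y = ((m : ℝ) - y * d) / d := by field_simp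
      rw [e, abs_div, abs_of_pos hd0]
      gcongr
      rw [abs_le]
      constructor <;> nlinarith
    have htot : |Real.sqrt (∑ i : Fin (d + 1), ((diagB d 1 i : ℝ) - (diagB d (1 + m) i : ℝ)) ^ 2)
        / (d : ℝ) ^ ((3 : ℝ) / 2) - y| ≤ 11 / d := by
      calc |Real.sqrt (∑ i : Fin (d + 1), ((diagB d 1 i : ℝ) - (diagB d (1 + m) i : ℝ)) ^ 2)
          / (d : ℝ) ^ ((3 : ℝ) / 2) - y|
          ≤ |Real.sqrt (∑ i : Fin (d + 1), ((diagB d 1 i : ℝ) - (diagB d (1 + m) i : ℝ)) ^ 2)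
          / (d : ℝ) ^ ((3 : ℝ) / 2) - (m : ℝ) / d| + |(m : ℝ) / d - y| := abs_sub_le _ _ _
        _ ≤ 9 / d + 2 / d := add_le_add hkey hclose
        _ = 11 / d := by ring
    have hlt : (11:ℝ) / d < ε := by
      rw [div_lt_iff₀ hd0]
      linarith
    exact lt_of_le_of_lt htot hlt
end

section
/- Let d ≥ 2 and N ≥ 3d, let Ω be the set of pairs of mutually visible points of W = ({0,…,N})^d, and let dist_d(v,w) = dist(v,w)/(N√d) be the normalized Euclidean distance. Then there is an absolute constant C₃ > 0 such that (1/#Ω)·Σ_{(v,w)∈Ω} (dist_d²(v,w) − 1/6)² ≤ C₃·(1/d + d/N). Consequently, for any T > 0, the proportion of pairs (v,w) ∈ Ω with |dist_d(v,w) − 1/√6| ≥ 1/T is at most 6·C₃·T²·(1/d + d/N). -/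
open Finset

lemma sm_sum_range_sq (n : ℕ) :
    ∑ i ∈ Finset.range n, (i:ℝ)^2 = n*(n-1)*(2*n-1)/6 := by
  induction n with
  | zero => simp
  | succ m ih =>
    rw [Finset.sum_range_succ, ih]
    push_cast
    ring

lemma sm_sum_range_id (n : ℕ) :
    ∑ i ∈ Finset.range n, (i:ℝ) = n*(n-1)/2 := by
  induction n with
  | zero => simp
  | succ m ih =>
    rw [Finset.sum_range_succ, ih]
    push_cast
    ring

-- sum over pairs of squared differences
lemma sm_sum_b (N : ℕ) :
    ∑ z : Fin (N+1) × Fin (N+1), (((z.1:ℕ):ℝ) - ((z.2:ℕ):ℝ))^2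
      = (N+1)^2 * (N*(N+2)/6) := by
  have hS1 : ∑ x : Fin (N+1), ((x:ℕ):ℝ) = (N+1)*N/2 := by
    rw [Fin.sum_univ_eq_sum_range (fun i => (i:ℝ)), sm_sum_range_id]
    push_cast; ring
  have hS2 : ∑ x : Fin (N+1), ((x:ℕ):ℝ)^2 = (N+1)*N*(2*N+1)/6 := by
    rw [Fin.sum_univ_eq_sum_range (fun i => (i:ℝ)^2), sm_sum_range_sq]
    push_cast; ring
  rw [Fintype.sum_prod_type]
  have : ∀ x : Fin (N+1), ∑ y : Fin (N+1), (((x:ℕ):ℝ) - ((y:ℕ):ℝ))^2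
      = (N+1)*((x:ℕ):ℝ)^2 - 2*((x:ℕ):ℝ)*((N+1)*N/2) + (N+1)*N*(2*N+1)/6 := by
    intro x
    have : ∀ y : Fin (N+1), (((x:ℕ):ℝ) - ((y:ℕ):ℝ))^2
        = ((x:ℕ):ℝ)^2 - 2*((x:ℕ):ℝ)*((y:ℕ):ℝ) + ((y:ℕ):ℝ)^2 := by intro y; ring
    simp_rw [this]
    rw [Finset.sum_add_distrib, Finset.sum_sub_distrib, ← Finset.mul_sum, hS1, hS2]
    simp [Finset.card_univ]
  simp_rw [this]
  rw [Finset.sum_add_distrib, Finset.sum_sub_distrib, ← Finset.mul_sum]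
  simp_rw [mul_comm (2:ℝ), mul_assoc]
  rw [← Finset.sum_mul, hS2, hS1]
  simp [Finset.card_univ]
  ring

lemma sm_sum_pi {β : Type*} [Fintype β] {α : Type*} [CommSemiring α] {d : ℕ}
    (h : Fin d → β → α) :
    ∑ g : Fin d → β, ∏ i, h i (g i) = ∏ i, ∑ z, h i z :=
  (Fintype.prod_sum h).symm

lemma sm_sum_pi2 {M d : ℕ} {α : Type*} [CommSemiring α] (h : Fin d → Fin M → Fin M → α) :
    ∑ q : (Fin d → Fin M) × (Fin d → Fin M), ∏ i, h i (q.1 i) (q.2 i)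
      = ∏ i, ∑ x : Fin M, ∑ y : Fin M, h i x y := by
  rw [Fintype.sum_prod_type]
  have key : ∀ f : Fin d → Fin M,
      ∑ g : Fin d → Fin M, ∏ i, h i (f i) (g i) = ∏ i, ∑ y, h i (f i) y :=
    fun f => sm_sum_pi (fun i y => h i (f i) y)
  simp_rw [key]
  exact sm_sum_pi (fun i x => ∑ y, h i x y)

-- single coordinate extraction
lemma sm_sum_single {M d : ℕ} (e : Fin M → Fin M → ℝ) (i : Fin d) :
    ∑ q : (Fin d → Fin M) × (Fin d → Fin M), e (q.1 i) (q.2 i)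
      = (∑ x, ∑ y, e x y) * ((M:ℝ)^2)^(d-1) := by
  have h1 : ∀ q : (Fin d → Fin M) × (Fin d → Fin M),
      e (q.1 i) (q.2 i) = ∏ k, (if k = i then e (q.1 k) (q.2 k) else 1) := by
    intro q
    rw [Finset.prod_ite_eq' Finset.univ i (fun k => e (q.1 k) (q.2 k))]
    simp
  simp_rw [h1]
  rw [sm_sum_pi2 (fun k x y => if k = i then e x y else 1)]
  rw [Finset.prod_eq_prod_diff_singleton_mul (Finset.mem_univ i)]
  simp only [if_pos rfl]
  have h2 : ∀ k ∈ Finset.univ \ {i}, (∑ x : Fin M, ∑ y : Fin M,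
      (if k = i then e x y else 1)) = (M:ℝ)^2 := by
    intro k hk
    simp only [Finset.mem_sdiff, Finset.mem_singleton] at hk
    simp [if_neg hk.2, Finset.card_univ]
    ring
  rw [Finset.prod_congr rfl h2, Finset.prod_const]
  have : (Finset.univ \ {i} : Finset (Fin d)).card = d - 1 := by
    rw [Finset.card_sdiff_of_subset (by simp)]
    simp
  rw [this, mul_comm]
  simp

-- pair coordinate extraction
lemma sm_sum_pair {M d : ℕ} (e : Fin M → Fin M → ℝ) (he : ∑ x, ∑ y, e x y = 0)
    (i j : Fin d) (hij : i ≠ j) :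
    ∑ q : (Fin d → Fin M) × (Fin d → Fin M), e (q.1 i) (q.2 i) * e (q.1 j) (q.2 j) = 0 := by
  have h1 : ∀ q : (Fin d → Fin M) × (Fin d → Fin M),
      e (q.1 i) (q.2 i) * e (q.1 j) (q.2 j)
        = ∏ k, ((if k = i then e (q.1 k) (q.2 k) else 1) *
                (if k = j then e (q.1 k) (q.2 k) else 1)) := by
    intro q
    rw [Finset.prod_mul_distrib,
      Finset.prod_ite_eq' Finset.univ i (fun k => e (q.1 k) (q.2 k)),
      Finset.prod_ite_eq' Finset.univ j (fun k => e (q.1 k) (q.2 k))]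
    simp
  simp_rw [h1]
  rw [sm_sum_pi2 (fun k x y => (if k = i then e x y else 1) * (if k = j then e x y else 1))]
  apply Finset.prod_eq_zero (Finset.mem_univ i)
  simp only [if_pos rfl, if_neg hij]
  simpa using he

-- diagonal extraction
lemma sm_sum_diag {M d : ℕ} (e : Fin M → Fin M → ℝ) (i : Fin d) :
    ∑ q : (Fin d → Fin M) × (Fin d → Fin M), e (q.1 i) (q.2 i) * e (q.1 i) (q.2 i)
      = (∑ x, ∑ y, e x y * e x y) * ((M:ℝ)^2)^(d-1) :=
  sm_sum_single (fun x y => e x y * e x y) i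

lemma sm_card_P (N d : ℕ) :
    ((Finset.univ : Finset ((Fin d → Fin (N+1)) × (Fin d → Fin (N+1)))).card : ℝ)
      = (((N+1:ℕ):ℝ)^2)^d := by
  rw [Finset.card_univ, Fintype.card_prod, Fintype.card_fun, Fintype.card_fin, Fintype.card_fin]
  push_cast
  rw [← pow_add, ← two_mul, pow_mul]

lemma sm_moment_bound (N d : ℕ) (hd : 1 ≤ d) (hN : 2 ≤ N) :
    ∑ q : (Fin d → Fin (N+1)) × (Fin d → Fin (N+1)),
      ((∑ i, (((q.1 i : ℕ):ℝ) - ((q.2 i : ℕ):ℝ))^2) / ((N:ℝ)^2*d) - 1/6)^2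
    ≤ (((N+1:ℕ):ℝ)^2)^d * (1/(d:ℝ) + 1/(9*(N:ℝ)^2)) := by
  have hN0 : (0:ℝ) < N := by exact_mod_cast Nat.lt_of_lt_of_le (by norm_num) hN
  have hd0 : (0:ℝ) < d := by exact_mod_cast hd
  set μ : ℝ := (N:ℝ)*((N:ℝ)+2)/6 with hμ
  set e : Fin (N+1) → Fin (N+1) → ℝ :=
    fun x y => (((x:ℕ):ℝ) - ((y:ℕ):ℝ))^2 - μ with he_def
  set c : ℝ := 1/((N:ℝ)^2*(d:ℝ)) with hc
  set M2 : ℝ := ((N+1:ℕ):ℝ)^2 with hM2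
  have he0 : ∑ x, ∑ y, e x y = 0 := by
    have hb : ∑ x : Fin (N+1), ∑ y : Fin (N+1), (((x:ℕ):ℝ) - ((y:ℕ):ℝ))^2 = M2 * μ := by
      have h := sm_sum_b N
      rw [Fintype.sum_prod_type] at h
      rw [h, hM2, hμ]
      push_cast
      ring
    simp only [he_def, Finset.sum_sub_distrib, Finset.sum_const, Finset.card_univ,
      Fintype.card_fin, nsmul_eq_mul]
    rw [hb, hM2]
    push_cast
    ring
  set V : ℝ := ∑ x, ∑ y, e x y * e x y with hV
  have hpoint : ∀ q : (Fin d → Fin (N+1)) × (Fin d → Fin (N+1)),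
      ((∑ i, (((q.1 i : ℕ):ℝ) - ((q.2 i : ℕ):ℝ))^2) / ((N:ℝ)^2*d) - 1/6)^2
      = c^2 * ((∑ i, e (q.1 i) (q.2 i)) * (∑ i, e (q.1 i) (q.2 i)))
        + (2*c*(1/(3*(N:ℝ)))) * (∑ i, e (q.1 i) (q.2 i)) + (1/(3*(N:ℝ)))^2 := by
    intro q
    have hE : ∑ i, e (q.1 i) (q.2 i)
        = (∑ i, (((q.1 i : ℕ):ℝ) - ((q.2 i : ℕ):ℝ))^2) - (d:ℝ)*μ := by
      simp [he_def, Finset.sum_sub_distrib, Finset.sum_const, Finset.card_univ, mul_comm]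
    rw [hE]
    have h1 : (∑ i, (((q.1 i : ℕ):ℝ) - ((q.2 i : ℕ):ℝ))^2) / ((N:ℝ)^2*d) - 1/6
        = c * ((∑ i, (((q.1 i : ℕ):ℝ) - ((q.2 i : ℕ):ℝ))^2) - (d:ℝ)*μ) + 1/(3*(N:ℝ)) := by
      rw [hc, hμ]
      field_simp
      ring
    rw [h1]
    ring
  simp_rw [hpoint]
  rw [Finset.sum_add_distrib, Finset.sum_add_distrib, ← Finset.mul_sum, ← Finset.mul_sum,
    Finset.sum_const, Finset.card_univ]
  have hE1 : ∑ q : (Fin d → Fin (N+1)) × (Fin d → Fin (N+1)),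
      (∑ i, e (q.1 i) (q.2 i)) = 0 := by
    rw [Finset.sum_comm]
    apply Finset.sum_eq_zero
    intro i _
    rw [sm_sum_single e i, he0, zero_mul]
  have hE2 : ∑ q : (Fin d → Fin (N+1)) × (Fin d → Fin (N+1)),
      ((∑ i, e (q.1 i) (q.2 i)) * (∑ i, e (q.1 i) (q.2 i)))
      = (d:ℝ) * (V * M2^(d-1)) := by
    have expand : ∀ q : (Fin d → Fin (N+1)) × (Fin d → Fin (N+1)),
        (∑ i, e (q.1 i) (q.2 i)) * (∑ i, e (q.1 i) (q.2 i))
        = ∑ i, ∑ j, e (q.1 i) (q.2 i) * e (q.1 j) (q.2 j) := by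
      intro q
      rw [Finset.sum_mul_sum]
    simp_rw [expand]
    rw [Finset.sum_comm]
    have inner : ∀ i : Fin d,
        ∑ q : (Fin d → Fin (N+1)) × (Fin d → Fin (N+1)),
          ∑ j, e (q.1 i) (q.2 i) * e (q.1 j) (q.2 j) = V * M2^(d-1) := by
      intro i
      rw [Finset.sum_comm]
      have hterm : ∀ j : Fin d,
          ∑ q : (Fin d → Fin (N+1)) × (Fin d → Fin (N+1)),
            e (q.1 i) (q.2 i) * e (q.1 j) (q.2 j)
          = if i = j then V * M2^(d-1) else 0 := by
        intro j
        by_cases h : i = j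
        · subst h
          rw [if_pos rfl, sm_sum_diag e i, hV, hM2]
        · rw [if_neg h]
          exact sm_sum_pair e he0 i j h
      simp_rw [hterm]
      simp
    simp_rw [inner]
    rw [Finset.sum_const, Finset.card_univ, Fintype.card_fin, nsmul_eq_mul]
  rw [hE1, hE2, mul_zero, add_zero, nsmul_eq_mul]
  have hcard : ((Fintype.card ((Fin d → Fin (N+1)) × (Fin d → Fin (N+1)))) : ℝ) = M2^d := by
    rw [← Finset.card_univ, sm_card_P N d, hM2]
  rw [hcard]
  have hVb : V ≤ M2 * (N:ℝ)^4 := by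
    rw [hV]
    have hpt : ∀ x y : Fin (N+1), e x y * e x y ≤ (N:ℝ)^4 := by
      intro x y
      have hx : ((x:ℕ):ℝ) ≤ N := by exact_mod_cast Nat.cast_le.mpr (Fin.is_le x)
      have hy : ((y:ℕ):ℝ) ≤ N := by exact_mod_cast Nat.cast_le.mpr (Fin.is_le y)
      have hx0 : (0:ℝ) ≤ ((x:ℕ):ℝ) := Nat.cast_nonneg _
      have hy0 : (0:ℝ) ≤ ((y:ℕ):ℝ) := Nat.cast_nonneg _
      have hb1 : (((x:ℕ):ℝ) - ((y:ℕ):ℝ))^2 ≤ (N:ℝ)^2 := by nlinarith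
      have hb0 : (0:ℝ) ≤ (((x:ℕ):ℝ) - ((y:ℕ):ℝ))^2 := sq_nonneg _
      have hN2 : (2:ℝ) ≤ (N:ℝ) := by exact_mod_cast hN
      have hμ1 : μ ≤ (N:ℝ)^2 := by rw [hμ]; nlinarith [hN2, hN0]
      have hμ0 : (0:ℝ) ≤ μ := by rw [hμ]; positivity
      simp only [he_def]
      nlinarith
    calc ∑ x, ∑ y, e x y * e x y ≤ ∑ _x : Fin (N+1), ∑ _y : Fin (N+1), (N:ℝ)^4 := by
          apply Finset.sum_le_sum; intro x _; apply Finset.sum_le_sum; intro y _; exact hpt x y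
      _ = M2 * (N:ℝ)^4 := by
          simp only [Finset.sum_const, Finset.card_univ, Fintype.card_fin, nsmul_eq_mul, hM2]
          push_cast; ring
  have hM2pos : (0:ℝ) < M2 := by rw [hM2]; positivity
  have hMpow : M2^(d-1) * M2 = M2^d := by
    rw [← pow_succ, Nat.sub_add_cancel hd]
  have hc2 : c^2 * ((d:ℝ) * (M2 * (N:ℝ)^4 * M2^(d-1))) = M2^d * (1/(d:ℝ)) := by
    rw [hc, ← hMpow]
    field_simp
  calc c^2 * ((d:ℝ) * (V * M2^(d-1))) + M2^d * (1/(3*(N:ℝ)))^2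
      ≤ c^2 * ((d:ℝ) * (M2 * (N:ℝ)^4 * M2^(d-1))) + M2^d * (1/(9*(N:ℝ)^2)) := by
        apply add_le_add
        · apply mul_le_mul_of_nonneg_left _ (by positivity)
          apply mul_le_mul_of_nonneg_left _ (by positivity)
          exact mul_le_mul_of_nonneg_right hVb (by positivity)
        · apply le_of_eq
          congr 1
          field_simp
          ring
    _ = M2^d * (1/(d:ℝ) + 1/(9*(N:ℝ)^2)) := by rw [hc2]; ring

lemma sm_count_coord (N p : ℕ) (hp : 1 ≤ p) :
    (Finset.univ.filter (fun z : Fin (N+1) × Fin (N+1) =>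
        (p:ℤ) ∣ (((z.1:ℕ):ℤ) - ((z.2:ℕ):ℤ)))).card ≤ (N+1) * (N/p + 1) := by
  classical
  have : ((Finset.univ : Finset (Fin (N+1))) ×ˢ (Finset.range (N/p + 1))).card
      = (N+1) * (N/p + 1) := by
    rw [Finset.card_product, Finset.card_univ, Fintype.card_fin, Finset.card_range]
  rw [← this]
  apply Finset.card_le_card_of_injOn (fun z => (z.1, (z.2 : ℕ)/p))
  · intro z hz
    simp only [Finset.mem_coe, Finset.mem_product, Finset.mem_univ, Finset.mem_range, true_and]
    have := Fin.is_le z.2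
    exact Nat.lt_succ_of_le (Nat.div_le_div_right this)
  · intro z hz w hw hzw
    simp only [Finset.mem_coe, Finset.mem_filter, Finset.mem_univ, true_and] at hz hw
    simp only [Prod.mk.injEq] at hzw
    obtain ⟨h1, h2⟩ := hzw
    have hdvd : (p:ℤ) ∣ (((z.2:ℕ):ℤ) - ((w.2:ℕ):ℤ)) := by
      have h1' : ((z.1:ℕ):ℤ) = ((w.1:ℕ):ℤ) := by rw [h1]
      have hd := dvd_sub hw hz
      have h3 : ((w.1:ℕ):ℤ) - ((w.2:ℕ):ℤ) - ((((z.1:ℕ):ℤ)) - ((z.2:ℕ):ℤ))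
          = ((z.2:ℕ):ℤ) - ((w.2:ℕ):ℤ) := by rw [h1']; ring
      rwa [h3] at hd
    have hmod : (w.2:ℕ) ≡ (z.2:ℕ) [MOD p] := (Nat.modEq_iff_dvd).mpr hdvd
    have hmm : (w.2:ℕ) % p = (z.2:ℕ) % p := hmod
    have heq : (z.2 : ℕ) = (w.2 : ℕ) := by
      calc (z.2:ℕ) = p * ((z.2:ℕ)/p) + (z.2:ℕ)%p := (Nat.div_add_mod _ _).symm
        _ = p * ((w.2:ℕ)/p) + (w.2:ℕ)%p := by rw [h2, hmm]
        _ = (w.2:ℕ) := Nat.div_add_mod _ _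
    have : z.2 = w.2 := Fin.ext heq
    exact Prod.ext h1 this

-- number of q with all coordinate differences divisible by p
lemma sm_count_all (N d p : ℕ) :
    (Finset.univ.filter (fun q : (Fin d → Fin (N+1)) × (Fin d → Fin (N+1)) =>
        ∀ i, (p:ℤ) ∣ (((q.1 i:ℕ):ℤ) - ((q.2 i:ℕ):ℤ)))).card
    = (Finset.univ.filter (fun z : Fin (N+1) × Fin (N+1) =>
        (p:ℤ) ∣ (((z.1:ℕ):ℤ) - ((z.2:ℕ):ℤ)))).card ^ d := by
  classical
  rw [Finset.card_filter]
  have hind : ∀ q : (Fin d → Fin (N+1)) × (Fin d → Fin (N+1)),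
      (if (∀ i, (p:ℤ) ∣ (((q.1 i:ℕ):ℤ) - ((q.2 i:ℕ):ℤ))) then 1 else 0)
      = ∏ i, (if (p:ℤ) ∣ (((q.1 i:ℕ):ℤ) - ((q.2 i:ℕ):ℤ)) then (1:ℕ) else 0) := by
    intro q
    rw [Finset.prod_boole]
    congr 1
    simp only [Finset.mem_univ, true_implies, eq_iff_iff]
  simp_rw [hind]
  rw [sm_sum_pi2 (fun _ x y => if (p:ℤ) ∣ (((x:ℕ):ℤ) - ((y:ℕ):ℤ)) then (1:ℕ) else 0)]
  rw [Finset.prod_const, Finset.card_univ, Fintype.card_fin]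
  congr 1
  rw [Finset.card_filter, Fintype.sum_prod_type]

lemma sm_not_vis_subset (N d : ℕ) (hN : 2 ≤ N) :
    (Finset.univ.filter (fun q : (Fin d → Fin (N+1)) × (Fin d → Fin (N+1)) =>
        ¬ (Finset.univ.gcd (fun i => (((q.1 i:ℕ):ℤ) - ((q.2 i:ℕ):ℤ)).natAbs) = 1)))
    ⊆ (Finset.filter Nat.Prime (Finset.range (N+1))).biUnion
        (fun p => Finset.univ.filter
          (fun q : (Fin d → Fin (N+1)) × (Fin d → Fin (N+1)) =>
            ∀ i, (p:ℤ) ∣ (((q.1 i:ℕ):ℤ) - ((q.2 i:ℕ):ℤ)))) := by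
  intro q hq
  simp only [Finset.mem_filter, Finset.mem_univ, true_and] at hq
  set f : Fin d → ℕ := fun i => ((((q.1 i:ℕ):ℤ) - ((q.2 i:ℕ):ℤ)).natAbs) with hf
  by_cases hz : ∀ i, f i = 0
  · refine Finset.mem_biUnion.mpr ⟨2, ?_, ?_⟩
    · simp only [Finset.mem_filter, Finset.mem_range]
      exact ⟨by omega, Nat.prime_two⟩
    · simp only [Finset.mem_filter, Finset.mem_univ, true_and]
      intro i
      have h0 : (((q.1 i:ℕ):ℤ) - ((q.2 i:ℕ):ℤ)) = 0 := Int.natAbs_eq_zero.mp (hz i)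
      rw [h0]
      exact dvd_zero _
  · push_neg at hz
    obtain ⟨i₀, hi₀⟩ := hz
    set g := Finset.univ.gcd f with hg
    have hgdvd : ∀ i, g ∣ f i := fun i => Finset.gcd_dvd (Finset.mem_univ i)
    have hg0 : g ≠ 0 := by
      intro h
      exact hi₀ (Finset.gcd_eq_zero_iff.mp h i₀ (Finset.mem_univ _))
    have hg1 : g ≠ 1 := hq
    have hp := Nat.minFac_prime hg1
    have hple : g.minFac ≤ N := by
      have h1 : g.minFac ≤ g := Nat.minFac_le (Nat.pos_of_ne_zero hg0)
      have h2 : g ≤ f i₀ := Nat.le_of_dvd (Nat.pos_of_ne_zero hi₀) (hgdvd i₀)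
      have h3 : f i₀ ≤ N := by
        have hx : (q.1 i₀ : ℕ) ≤ N := Fin.is_le _
        have hy : (q.2 i₀ : ℕ) ≤ N := Fin.is_le _
        simp only [hf]
        omega
      omega
    refine Finset.mem_biUnion.mpr ⟨g.minFac, ?_, ?_⟩
    · simp only [Finset.mem_filter, Finset.mem_range]
      exact ⟨by omega, hp⟩
    · simp only [Finset.mem_filter, Finset.mem_univ, true_and]
      intro i
      have hd1 : g.minFac ∣ f i := dvd_trans (Nat.minFac_dvd g) (hgdvd i)
      exact Int.natCast_dvd.mpr hd1

lemma sm_prime_sq_sum (N : ℕ) :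
    ∑ p ∈ Finset.filter Nat.Prime (Finset.range (N+1)), 1/((p:ℝ))^2 ≤ 35/72 := by
  classical
  set P := Finset.filter Nat.Prime (Finset.range (N+1)) with hP
  rw [← Finset.sum_filter_add_sum_filter_not P (fun p => p < 5) (fun p => 1/((p:ℝ))^2)]
  have h1 : ∑ p ∈ P.filter (fun p => p < 5), 1/((p:ℝ))^2 ≤ 13/36 := by
    have hsub : P.filter (fun p => p < 5) ⊆ ({2, 3} : Finset ℕ) := by
      intro p hp
      simp only [hP, Finset.mem_filter, Finset.mem_range] at hp
      obtain ⟨⟨_, hprime⟩, h5⟩ := hp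
      have h2 := hprime.two_le
      interval_cases p
      · simp
      · simp
      · exact absurd hprime (by norm_num)
    calc ∑ p ∈ P.filter (fun p => p < 5), 1/((p:ℝ))^2
        ≤ ∑ p ∈ ({2,3} : Finset ℕ), 1/((p:ℝ))^2 :=
          Finset.sum_le_sum_of_subset_of_nonneg hsub (fun _ _ _ => by positivity)
      _ = 13/36 := by norm_num
  have h2 : ∑ p ∈ P.filter (fun p => ¬ p < 5), 1/((p:ℝ))^2 ≤ 1/8 := by
    set Q := P.filter (fun p => ¬ p < 5) with hQ
    set G : ℕ → ℝ := fun k => 1/(4*(k:ℝ)) - 1/(4*((k:ℝ)+1)) with hG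
    have hodd : ∀ p ∈ Q, p % 2 = 1 ∧ 5 ≤ p := by
      intro p hp
      simp only [hQ, hP, Finset.mem_filter, Finset.mem_range, not_lt] at hp
      obtain ⟨⟨_, hprime⟩, h5⟩ := hp
      have := hprime.eq_two_or_odd
      constructor
      · omega
      · omega
    have hpt : ∀ p ∈ Q, 1/((p:ℝ))^2 ≤ G (p/2) := by
      intro p hp
      obtain ⟨hop, h5⟩ := hodd p hp
      set k := p / 2 with hk
      have hpk : p = 2*k + 1 := by omega
      have hk2 : 2 ≤ k := by omega
      have hkR : (2:ℝ) ≤ (k:ℝ) := by exact_mod_cast hk2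
      have hpR : ((p:ℝ)) = 2*(k:ℝ)+1 := by rw [hpk]; push_cast; ring
      have hG' : G k = 1/(4*(k:ℝ)*((k:ℝ)+1)) := by
        rw [hG]
        field_simp
        ring
      rw [hG', hpR]
      rw [div_le_div_iff₀ (by positivity) (by positivity)]
      nlinarith [hkR]
    calc ∑ p ∈ Q, 1/((p:ℝ))^2 ≤ ∑ p ∈ Q, G (p/2) := Finset.sum_le_sum hpt
      _ = ∑ k ∈ Q.image (fun p => p / 2), G k := by
          rw [Finset.sum_image]
          intro p hp q hq hpq
          obtain ⟨hop, _⟩ := hodd p hp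
          obtain ⟨hoq, _⟩ := hodd q hq
          have hpq' : p / 2 = q / 2 := hpq
          omega
      _ ≤ ∑ k ∈ Finset.Ico 2 (N+1), G k := by
          apply Finset.sum_le_sum_of_subset_of_nonneg
          · intro k hk
            simp only [Finset.mem_image] at hk
            obtain ⟨p, hp, hpk⟩ := hk
            obtain ⟨hop, h5⟩ := hodd p hp
            have hpN : p < N + 1 := by
              simp only [hQ, hP, Finset.mem_filter, Finset.mem_range] at hp
              exact hp.1.1
            simp only [Finset.mem_Ico]
            omega
          · intro k hk _
            simp only [Finset.mem_Ico] at hk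
            have : (2:ℝ) ≤ (k:ℝ) := by exact_mod_cast hk.1
            rw [hG]
            have : (0:ℝ) < (k:ℝ) := by linarith
            have h1 : 1/(4*((k:ℝ)+1)) ≤ 1/(4*(k:ℝ)) := by
              apply one_div_le_one_div_of_le (by positivity)
              linarith
            simp only []
            linarith
      _ ≤ 1/8 := by
          rw [Finset.sum_Ico_eq_sum_range]
          have htel : ∀ n : ℕ, ∑ i ∈ Finset.range n, G (2+i) = 1/8 - 1/(4*((n:ℝ)+2)) := by
            intro n
            induction n with
            | zero => simp [hG]; norm_num
            | succ m ih =>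
              rw [Finset.sum_range_succ, ih]
              have hm1 : ((m:ℝ)+2) ≠ 0 := by positivity
              have hm2 : ((m:ℝ)+3) ≠ 0 := by positivity
              simp only [hG]
              push_cast
              field_simp
              ring
          rw [htel]
          have : (0:ℝ) ≤ 1/(4*(((N+1-2:ℕ):ℝ)+2)) := by positivity
          linarith
  linarith

lemma sm_prime_count (N : ℕ) :
    ((Finset.filter Nat.Prime (Finset.range (N+1))).card : ℝ) ≤ ((N:ℝ)+1)/2 := by
  have hcard : (Finset.filter Nat.Prime (Finset.range (N+1))).card
      ≤ (Finset.Icc 1 ((N+1)/2)).card := by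
    apply Finset.card_le_card_of_injOn (fun p => (p+1)/2)
    · intro p hp
      simp only [Finset.mem_coe, Finset.mem_filter, Finset.mem_range] at hp
      obtain ⟨hpN, hprime⟩ := hp
      have := hprime.two_le
      simp only [Finset.mem_coe, Finset.mem_Icc]
      omega
    · intro p hp q hq hpq
      have hpq' : (p+1)/2 = (q+1)/2 := hpq
      simp only [Finset.mem_coe, Finset.mem_filter, Finset.mem_range] at hp hq
      have hp2 := hp.2.eq_two_or_odd
      have hq2 := hq.2.eq_two_or_odd
      have hp3 := hp.2.two_le
      have hq3 := hq.2.two_le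
      have hp4 : p ≠ 4 := by rintro rfl; exact absurd hp.2 (by norm_num)
      have hq4 : q ≠ 4 := by rintro rfl; exact absurd hq.2 (by norm_num)
      omega
  have h2 : ((Finset.Icc 1 ((N+1)/2)).card : ℝ) ≤ ((N:ℝ)+1)/2 := by
    rw [Nat.card_Icc, Nat.add_sub_cancel]
    have h3 := Nat.cast_div_le (m := N+1) (n := 2) (α := ℝ)
    push_cast at h3
    linarith
  calc ((Finset.filter Nat.Prime (Finset.range (N+1))).card : ℝ)
      ≤ ((Finset.Icc 1 ((N+1)/2)).card : ℝ) := by exact_mod_cast hcard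
    _ ≤ ((N:ℝ)+1)/2 := h2

lemma sm_vis_card_lb (N d : ℕ) (hd : 2 ≤ d) (hN6 : 6 ≤ N) :
    (19/336) * (((N+1:ℕ):ℝ)^2)^d
      ≤ ((Finset.univ.filter (fun q : (Fin d → Fin (N+1)) × (Fin d → Fin (N+1)) =>
          Finset.univ.gcd (fun i => (((q.1 i:ℕ):ℤ) - ((q.2 i:ℕ):ℤ)).natAbs) = 1)).card : ℝ) := by
  classical
  set M : ℝ := ((N+1:ℕ):ℝ) with hM
  have hM7 : (7:ℝ) ≤ M := by
    rw [hM]; exact_mod_cast Nat.succ_le_succ hN6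
  have hM0 : (0:ℝ) < M := by linarith
  set S := Finset.univ.filter (fun q : (Fin d → Fin (N+1)) × (Fin d → Fin (N+1)) =>
          Finset.univ.gcd (fun i => (((q.1 i:ℕ):ℤ) - ((q.2 i:ℕ):ℤ)).natAbs) = 1) with hS
  set Sc := Finset.univ.filter (fun q : (Fin d → Fin (N+1)) × (Fin d → Fin (N+1)) =>
          ¬ (Finset.univ.gcd (fun i => (((q.1 i:ℕ):ℤ) - ((q.2 i:ℕ):ℤ)).natAbs) = 1)) with hSc
  have htot : (S.card : ℝ) + (Sc.card : ℝ) = (M^2)^d := by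
    have hn : S.card + Sc.card
        = (Finset.univ : Finset ((Fin d → Fin (N+1)) × (Fin d → Fin (N+1)))).card :=
      Finset.card_filter_add_card_filter_not
        (s := Finset.univ) (p := fun q : (Fin d → Fin (N+1)) × (Fin d → Fin (N+1)) =>
          Finset.univ.gcd (fun i => (((q.1 i:ℕ):ℤ) - ((q.2 i:ℕ):ℤ)).natAbs) = 1)
    rw [← Nat.cast_add, hn, sm_card_P N d]
  -- bound on the complement
  have hScnat : Sc.card ≤ ∑ p ∈ Finset.filter Nat.Prime (Finset.range (N+1)),
      (Finset.univ.filter (fun z : Fin (N+1) × Fin (N+1) =>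
        (p:ℤ) ∣ (((z.1:ℕ):ℤ) - ((z.2:ℕ):ℤ)))).card ^ d := by
    calc Sc.card ≤ ((Finset.filter Nat.Prime (Finset.range (N+1))).biUnion
        (fun p => Finset.univ.filter
          (fun q : (Fin d → Fin (N+1)) × (Fin d → Fin (N+1)) =>
            ∀ i, (p:ℤ) ∣ (((q.1 i:ℕ):ℤ) - ((q.2 i:ℕ):ℤ))))).card :=
          Finset.card_le_card (sm_not_vis_subset N d (by omega))
      _ ≤ ∑ p ∈ Finset.filter Nat.Prime (Finset.range (N+1)),
          (Finset.univ.filter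
          (fun q : (Fin d → Fin (N+1)) × (Fin d → Fin (N+1)) =>
            ∀ i, (p:ℤ) ∣ (((q.1 i:ℕ):ℤ) - ((q.2 i:ℕ):ℤ)))).card :=
          Finset.card_biUnion_le
      _ = _ := Finset.sum_congr rfl (fun p _ => sm_count_all N d p)
  have hterm : ∀ p ∈ Finset.filter Nat.Prime (Finset.range (N+1)),
      (((Finset.univ.filter (fun z : Fin (N+1) × Fin (N+1) =>
        (p:ℤ) ∣ (((z.1:ℕ):ℤ) - ((z.2:ℕ):ℤ)))).card : ℝ)) ^ d
      ≤ (M^2)^d * ((3/2)*(1/(p:ℝ)^2) + 3*(1/M^2)) := by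
    intro p hp
    simp only [Finset.mem_filter, Finset.mem_range] at hp
    obtain ⟨hpN, hprime⟩ := hp
    have hp2 : 2 ≤ p := hprime.two_le
    have hp2R : (2:ℝ) ≤ (p:ℝ) := by exact_mod_cast hp2
    have hp0R : (0:ℝ) < (p:ℝ) := by linarith
    set ρ : ℝ := 1/(p:ℝ) + 1/M with hρ
    have hρ0 : 0 ≤ ρ := by positivity
    have hρ1 : ρ ≤ 1 := by
      rw [hρ]
      have h1 : 1/(p:ℝ) ≤ 1/2 := by
        apply one_div_le_one_div_of_le <;> linarith
      have h2 : 1/M ≤ 1/7 := by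
        apply one_div_le_one_div_of_le <;> linarith
      linarith
    have hcR : (((Finset.univ.filter (fun z : Fin (N+1) × Fin (N+1) =>
        (p:ℤ) ∣ (((z.1:ℕ):ℤ) - ((z.2:ℕ):ℤ)))).card : ℝ)) ≤ M^2 * ρ := by
      have h1 := sm_count_coord N p (by omega)
      have h2 : (((N+1) * (N/p + 1) : ℕ) : ℝ) ≤ M * ((N:ℝ)/(p:ℝ) + 1) := by
        push_cast
        have h3 : ((N/p : ℕ) : ℝ) ≤ (N:ℝ)/(p:ℝ) := Nat.cast_div_le
        rw [hM]
        push_cast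
        nlinarith [h3]
      have h4 : M * ((N:ℝ)/(p:ℝ) + 1) ≤ M^2 * ρ := by
        rw [hρ]
        have hNM : (N:ℝ) ≤ M := by rw [hM]; push_cast; linarith
        have hdiv : (N:ℝ)/(p:ℝ) ≤ M/(p:ℝ) := by gcongr
        calc M * ((N:ℝ)/(p:ℝ) + 1) ≤ M * (M/(p:ℝ) + 1) :=
              mul_le_mul_of_nonneg_left (by linarith) (le_of_lt hM0)
          _ = M^2 * (1/(p:ℝ) + 1/M) := by field_simp
      calc (((Finset.univ.filter (fun z : Fin (N+1) × Fin (N+1) =>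
            (p:ℤ) ∣ (((z.1:ℕ):ℤ) - ((z.2:ℕ):ℤ)))).card : ℝ))
          ≤ (((N+1) * (N/p + 1) : ℕ) : ℝ) := by exact_mod_cast h1
        _ ≤ M * ((N:ℝ)/(p:ℝ) + 1) := h2
        _ ≤ M^2 * ρ := h4
    calc (((Finset.univ.filter (fun z : Fin (N+1) × Fin (N+1) =>
            (p:ℤ) ∣ (((z.1:ℕ):ℤ) - ((z.2:ℕ):ℤ)))).card : ℝ)) ^ d
        ≤ (M^2 * ρ)^d := by
          apply pow_le_pow_left₀ (by positivity) hcR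
      _ = (M^2)^d * ρ^d := by rw [mul_pow]
      _ ≤ (M^2)^d * ρ^2 := by
          apply mul_le_mul_of_nonneg_left _ (by positivity)
          exact pow_le_pow_of_le_one hρ0 hρ1 hd
      _ ≤ (M^2)^d * ((3/2)*(1/(p:ℝ)^2) + 3*(1/M^2)) := by
          apply mul_le_mul_of_nonneg_left _ (by positivity)
          rw [hρ]
          have e1 : 1/(p:ℝ)^2 = (1/(p:ℝ))^2 := by ring
          have e2 : 1/M^2 = (1/M)^2 := by ring
          rw [e1, e2]
          nlinarith [sq_nonneg (1/(p:ℝ) - 2*(1/M))]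
  have hsum : (Sc.card : ℝ) ≤ (M^2)^d * (317/336) := by
    have h1 : (Sc.card : ℝ) ≤ ∑ p ∈ Finset.filter Nat.Prime (Finset.range (N+1)),
        (((Finset.univ.filter (fun z : Fin (N+1) × Fin (N+1) =>
          (p:ℤ) ∣ (((z.1:ℕ):ℤ) - ((z.2:ℕ):ℤ)))).card : ℝ)) ^ d := by
      calc (Sc.card : ℝ)
          ≤ ((∑ p ∈ Finset.filter Nat.Prime (Finset.range (N+1)),
            (Finset.univ.filter (fun z : Fin (N+1) × Fin (N+1) =>
              (p:ℤ) ∣ (((z.1:ℕ):ℤ) - ((z.2:ℕ):ℤ)))).card ^ d : ℕ) : ℝ) :=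
            Nat.cast_le.mpr hScnat
        _ = _ := by push_cast; rfl
    have h2 : ∑ p ∈ Finset.filter Nat.Prime (Finset.range (N+1)),
        (((Finset.univ.filter (fun z : Fin (N+1) × Fin (N+1) =>
          (p:ℤ) ∣ (((z.1:ℕ):ℤ) - ((z.2:ℕ):ℤ)))).card : ℝ)) ^ d
        ≤ ∑ p ∈ Finset.filter Nat.Prime (Finset.range (N+1)),
          (M^2)^d * ((3/2)*(1/(p:ℝ)^2) + 3*(1/M^2)) :=
      Finset.sum_le_sum hterm
    have h3 : ∑ p ∈ Finset.filter Nat.Prime (Finset.range (N+1)),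
          (M^2)^d * ((3/2)*(1/(p:ℝ)^2) + 3*(1/M^2))
        = (M^2)^d * ((3/2) * (∑ p ∈ Finset.filter Nat.Prime (Finset.range (N+1)), 1/((p:ℝ))^2)
            + 3 * ((Finset.filter Nat.Prime (Finset.range (N+1))).card : ℝ) * (1/M^2)) := by
      rw [← Finset.mul_sum, Finset.sum_add_distrib, ← Finset.mul_sum, Finset.sum_const,
        nsmul_eq_mul]
      ring
    have h4 : (3/2) * (∑ p ∈ Finset.filter Nat.Prime (Finset.range (N+1)), 1/((p:ℝ))^2)
            + 3 * ((Finset.filter Nat.Prime (Finset.range (N+1))).card : ℝ) * (1/M^2)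
        ≤ 317/336 := by
      have h5 := sm_prime_sq_sum N
      have h6 := sm_prime_count N
      have h7 : ((N:ℝ)+1) = M := by rw [hM]; push_cast; ring
      rw [h7] at h6
      have h8 : 3 * ((Finset.filter Nat.Prime (Finset.range (N+1))).card : ℝ) * (1/M^2)
          ≤ 3 * (M/2) * (1/M^2) := by
        apply mul_le_mul_of_nonneg_right _ (by positivity)
        apply mul_le_mul_of_nonneg_left h6 (by norm_num)
      have h9 : 3 * (M/2) * (1/M^2) ≤ 3/14 := by
        have hMne : M ≠ 0 := by positivity
        have he : 3 * (M/2) * (1/M^2) = 3/(2*M) := by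
          field_simp
        rw [he, div_le_div_iff₀ (by linarith) (by norm_num)]
        linarith
      -- 35/48 + 3/14 = 317/336... check: 35/48 = 245/336, 3/14 = 72/336
      linarith [h5, h8, h9]
    calc (Sc.card : ℝ) ≤ _ := h1
      _ ≤ _ := h2
      _ = _ := h3
      _ ≤ (M^2)^d * (317/336) := by
          apply mul_le_mul_of_nonneg_left h4 (by positivity)
  linarith

lemma sm_cheb {X t : ℝ} (hX : 0 ≤ X) (ht : 0 < t)
    (h : 1/t ≤ |Real.sqrt X - 1/Real.sqrt 6|) : 1/(6*t^2) ≤ (X - 1/6)^2 := by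
  set a := Real.sqrt X with ha
  set r : ℝ := 1/Real.sqrt 6 with hr
  have ha0 : 0 ≤ a := Real.sqrt_nonneg X
  have ha2 : a^2 = X := Real.sq_sqrt hX
  have hr0 : 0 < r := by rw [hr]; positivity
  have hr2 : r^2 = 1/6 := by
    rw [hr, div_pow, one_pow, Real.sq_sqrt (by norm_num : (0:ℝ) ≤ 6)]
  have h1 : (1/t)^2 ≤ (a - r)^2 := by
    rw [← sq_abs (a - r)]
    apply pow_le_pow_left₀ (by positivity) h
  have h2 : r^2 ≤ (a + r)^2 := by nlinarith
  have h3 : (X - 1/6)^2 = (a-r)^2 * (a+r)^2 := by rw [← ha2, ← hr2]; ring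
  calc 1/(6*t^2) = (1/t)^2 * (1/6) := by ring
    _ ≤ (a-r)^2 * (1/6) := mul_le_mul_of_nonneg_right h1 (by norm_num)
    _ = (a-r)^2 * r^2 := by rw [hr2]
    _ ≤ (a-r)^2 * (a+r)^2 := mul_le_mul_of_nonneg_left h2 (sq_nonneg _)
    _ = (X - 1/6)^2 := h3.symm

/-- the second moment of dist_d² about 1/6 over visible pairs is
O(1/d + d/N), and the Chebyshev-type consequence for |dist_d − 1/√6| ≥ 1/T. -/
theorem second_moment_visible_pairs :
    ∃ C₃ : ℝ, 0 < C₃ ∧ ∀ d N : ℕ, 2 ≤ d → 3 * d ≤ N →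
      (1 / ((Finset.univ.filter (fun q : (Fin d → Fin (N + 1)) × (Fin d → Fin (N + 1)) =>
            Finset.univ.gcd
              (fun i => (((q.1 i : ℕ) : ℤ) - ((q.2 i : ℕ) : ℤ)).natAbs) = 1)).card : ℝ)) *
        (∑ q ∈ Finset.univ.filter (fun q : (Fin d → Fin (N + 1)) × (Fin d → Fin (N + 1)) =>
            Finset.univ.gcd
              (fun i => (((q.1 i : ℕ) : ℤ) - ((q.2 i : ℕ) : ℤ)).natAbs) = 1),
          ((∑ i : Fin d, (((q.1 i : ℕ) : ℝ) - ((q.2 i : ℕ) : ℝ)) ^ 2) / ((N : ℝ) ^ 2 * d)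
            - 1 / 6) ^ 2)
      ≤ C₃ * (1 / (d : ℝ) + (d : ℝ) / N) ∧
      ∀ T : ℝ, 0 < T →
        (((Finset.univ.filter (fun q : (Fin d → Fin (N + 1)) × (Fin d → Fin (N + 1)) =>
            (Finset.univ.gcd
              (fun i => (((q.1 i : ℕ) : ℤ) - ((q.2 i : ℕ) : ℤ)).natAbs) = 1) ∧
            1 / T ≤ |Real.sqrt (∑ i : Fin d, (((q.1 i : ℕ) : ℝ) - ((q.2 i : ℕ) : ℝ)) ^ 2)
                / ((N : ℝ) * Real.sqrt d) - 1 / Real.sqrt 6|)).card : ℝ)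
          / ((Finset.univ.filter (fun q : (Fin d → Fin (N + 1)) × (Fin d → Fin (N + 1)) =>
            Finset.univ.gcd
              (fun i => (((q.1 i : ℕ) : ℤ) - ((q.2 i : ℕ) : ℤ)).natAbs) = 1)).card : ℝ))
        ≤ 6 * C₃ * T ^ 2 * (1 / (d : ℝ) + (d : ℝ) / N) := by
  classical
  refine ⟨18, by norm_num, ?_⟩
  intro d N hd hN
  have hd1 : 1 ≤ d := by omega
  have hN6 : 6 ≤ N := by omega
  have hdR : (1:ℝ) ≤ (d:ℝ) := by exact_mod_cast hd1
  have hNR : (6:ℝ) ≤ (N:ℝ) := by exact_mod_cast hN6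
  have hd0 : (0:ℝ) < (d:ℝ) := by linarith
  have hN0 : (0:ℝ) < (N:ℝ) := by linarith
  set S := Finset.univ.filter (fun q : (Fin d → Fin (N + 1)) × (Fin d → Fin (N + 1)) =>
            Finset.univ.gcd
              (fun i => (((q.1 i : ℕ) : ℤ) - ((q.2 i : ℕ) : ℤ)).natAbs) = 1) with hSdef
  set f : (Fin d → Fin (N + 1)) × (Fin d → Fin (N + 1)) → ℝ :=
    fun q => ((∑ i : Fin d, (((q.1 i : ℕ) : ℝ) - ((q.2 i : ℕ) : ℝ)) ^ 2) / ((N : ℝ) ^ 2 * d)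
            - 1 / 6) ^ 2 with hfdef
  have hcard_lb : (19/336) * (((N+1:ℕ):ℝ)^2)^d ≤ (S.card : ℝ) :=
    sm_vis_card_lb N d hd hN6
  have hpow0 : (0:ℝ) < (((N+1:ℕ):ℝ)^2)^d := by positivity
  have hS0 : (0:ℝ) < (S.card : ℝ) := by nlinarith
  have hsum_le : ∑ q ∈ S, f q ≤ (((N+1:ℕ):ℝ)^2)^d * (1/(d:ℝ) + 1/(9*(N:ℝ)^2)) := by
    calc ∑ q ∈ S, f q ≤ ∑ q : (Fin d → Fin (N + 1)) × (Fin d → Fin (N + 1)), f q :=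
        Finset.sum_le_sum_of_subset_of_nonneg (Finset.filter_subset _ _)
          (fun q _ _ => sq_nonneg _)
      _ ≤ _ := sm_moment_bound N d hd1 (by omega)
  have hfrac : (((N+1:ℕ):ℝ)^2)^d ≤ (336/19) * (S.card : ℝ) := by linarith
  have hx0 : (0:ℝ) ≤ 1/(d:ℝ) + 1/(9*(N:ℝ)^2) := by positivity
  have hA : ∑ q ∈ S, f q ≤ (S.card : ℝ) * (18 * (1/(d:ℝ) + (d:ℝ)/N)) := by
    have h1 : ∑ q ∈ S, f q ≤ (336/19) * (S.card : ℝ) * (1/(d:ℝ) + 1/(9*(N:ℝ)^2)) := by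
      calc ∑ q ∈ S, f q ≤ (((N+1:ℕ):ℝ)^2)^d * (1/(d:ℝ) + 1/(9*(N:ℝ)^2)) := hsum_le
        _ ≤ (336/19) * (S.card : ℝ) * (1/(d:ℝ) + 1/(9*(N:ℝ)^2)) :=
            mul_le_mul_of_nonneg_right hfrac hx0
    have h2 : (336/19) * (1/(d:ℝ) + 1/(9*(N:ℝ)^2)) ≤ 18 * (1/(d:ℝ) + (d:ℝ)/N) := by
      have t1 : (336/19) * (1/(d:ℝ)) ≤ 18 * (1/(d:ℝ)) :=
        mul_le_mul_of_nonneg_right (by norm_num) (by positivity)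
      have t2 : (336/19) * (1/(9*(N:ℝ)^2)) ≤ 18 * ((d:ℝ)/N) := by
        have s1 : (336/19) * (1/(9*(N:ℝ)^2)) ≤ 2 * (1/(N:ℝ)^2) := by
          rw [mul_one_div, mul_one_div]
          rw [div_le_div_iff₀ (by positivity) (by positivity)]
          nlinarith
        have s2 : 2 * (1/(N:ℝ)^2) ≤ 2 * ((d:ℝ)/N) := by
          apply mul_le_mul_of_nonneg_left _ (by norm_num)
          rw [div_le_div_iff₀ (by positivity) (by positivity)]
          nlinarith
        have s3 : 2 * ((d:ℝ)/N) ≤ 18 * ((d:ℝ)/N) :=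
          mul_le_mul_of_nonneg_right (by norm_num) (by positivity)
        linarith
      linarith
    calc ∑ q ∈ S, f q ≤ (336/19) * (S.card : ℝ) * (1/(d:ℝ) + 1/(9*(N:ℝ)^2)) := h1
      _ = (S.card : ℝ) * ((336/19) * (1/(d:ℝ) + 1/(9*(N:ℝ)^2))) := by ring
      _ ≤ (S.card : ℝ) * (18 * (1/(d:ℝ) + (d:ℝ)/N)) :=
          mul_le_mul_of_nonneg_left h2 (le_of_lt hS0)
  constructor
  · -- part 1
    rw [one_div, inv_mul_le_iff₀ hS0]
    exact hA
  · -- part 2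
    intro T hT
    set E := Finset.univ.filter (fun q : (Fin d → Fin (N + 1)) × (Fin d → Fin (N + 1)) =>
            (Finset.univ.gcd
              (fun i => (((q.1 i : ℕ) : ℤ) - ((q.2 i : ℕ) : ℤ)).natAbs) = 1) ∧
            1 / T ≤ |Real.sqrt (∑ i : Fin d, (((q.1 i : ℕ) : ℝ) - ((q.2 i : ℕ) : ℝ)) ^ 2)
                / ((N : ℝ) * Real.sqrt d) - 1 / Real.sqrt 6|) with hEdef
    have hsub : E ⊆ S := by
      intro q hq
      simp only [hEdef, Finset.mem_filter, Finset.mem_univ, true_and] at hq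
      simp only [hSdef, Finset.mem_filter, Finset.mem_univ, true_and]
      exact hq.1
    have hpt : ∀ q ∈ E, 1/(6*T^2) ≤ f q := by
      intro q hq
      simp only [hEdef, Finset.mem_filter, Finset.mem_univ, true_and] at hq
      obtain ⟨-, hev⟩ := hq
      have hSig0 : (0:ℝ) ≤ ∑ i : Fin d, (((q.1 i : ℕ) : ℝ) - ((q.2 i : ℕ) : ℝ)) ^ 2 :=
        Finset.sum_nonneg (fun i _ => sq_nonneg _)
      have hrw : Real.sqrt ((∑ i : Fin d, (((q.1 i : ℕ) : ℝ) - ((q.2 i : ℕ) : ℝ)) ^ 2)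
            / ((N:ℝ)^2*(d:ℝ)))
          = Real.sqrt (∑ i : Fin d, (((q.1 i : ℕ) : ℝ) - ((q.2 i : ℕ) : ℝ)) ^ 2)
            / ((N:ℝ) * Real.sqrt d) := by
        rw [Real.sqrt_div hSig0, Real.sqrt_mul (sq_nonneg ((N:ℝ))) ((d:ℝ)),
          Real.sqrt_sq hN0.le]
      rw [← hrw] at hev
      have hX0 : (0:ℝ) ≤ (∑ i : Fin d, (((q.1 i : ℕ) : ℝ) - ((q.2 i : ℕ) : ℝ)) ^ 2)
          / ((N:ℝ)^2*(d:ℝ)) := div_nonneg hSig0 (by positivity)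
      exact sm_cheb hX0 hT hev
    have hcount : (E.card : ℝ) * (1/(6*T^2)) ≤ ∑ q ∈ E, f q := by
      calc (E.card : ℝ) * (1/(6*T^2)) = ∑ _q ∈ E, 1/(6*T^2) := by
            rw [Finset.sum_const, nsmul_eq_mul]
        _ ≤ ∑ q ∈ E, f q := Finset.sum_le_sum hpt
    have hES : ∑ q ∈ E, f q ≤ ∑ q ∈ S, f q :=
      Finset.sum_le_sum_of_subset_of_nonneg hsub (fun q _ _ => sq_nonneg _)
    rw [div_le_iff₀ hS0]
    have hchain : (E.card : ℝ) * (1/(6*T^2))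
        ≤ (S.card : ℝ) * (18 * (1/(d:ℝ) + (d:ℝ)/N)) := hcount.trans (hES.trans hA)
    have h2 : (E.card : ℝ) ≤ (S.card : ℝ) * (18 * (1/(d:ℝ) + (d:ℝ)/N)) * (6*T^2) := by
      have hmul := mul_le_mul_of_nonneg_right hchain (by positivity : (0:ℝ) ≤ 6*T^2)
      have hne : (6*T^2) ≠ 0 := by positivity
      calc (E.card : ℝ) = (E.card : ℝ) * (1/(6*T^2)) * (6*T^2) := by field_simp
        _ ≤ _ := hmul
    calc (E.card : ℝ) ≤ (S.card : ℝ) * (18 * (1/(d:ℝ) + (d:ℝ)/N)) * (6*T^2) := h2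
      _ = 6*18*T^2*(1/(d:ℝ) + (d:ℝ)/N)*(S.card : ℝ) := by ring
end
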